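/- arXiv:1409.5614 — 6 statements merged into one kernel-verified Lean document; each statement's English description precedes it below -/
import Mathlib

section
/- If S is a cyclotomic numerical semigroup, then P_S is selfreciprocal: x^{deg P_S} · P_S(1/x) = P_S(x), i.e., the coefficient of x^i in P_S equals the coefficient of x^{deg P_S − i} for all i. -/
open Polynomial
open scoped Classical

/-- A numerical semigroup: a subset of `ℕ` containing `0`, closed under addition,
with finite complement in `ℕ`. -/
structure NumericalSemigroup where
  carrier : Set ℕ
  zero_mem : 0 ∈ carrier
  add_mem : ∀ ⦃a b : ℕ⦄, a ∈ carrier → b ∈ carrier → a + b ∈ carrier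
  finite_compl : Set.Finite carrierᶜ

namespace NumericalSemigroup

/-- The Hilbert series `H_S(x) = Σ_{s ∈ S} x^s`. -/
noncomputable def H (S : NumericalSemigroup) : PowerSeries ℤ :=
  PowerSeries.mk fun n => if n ∈ S.carrier then 1 else 0

/-- The Hilbert series evaluated at `x^w`: `H_S(x^w) = Σ_{s ∈ S} x^{w·s}`. -/
noncomputable def Hexp (S : NumericalSemigroup) (w : ℕ) : PowerSeries ℤ :=
  PowerSeries.mk fun n => if ∃ s ∈ S.carrier, n = w * s then 1 else 0

/-- The semigroup polynomial `P_S(x) = (1-x)·H_S(x) = 1 + (x-1)·Σ_{s ∉ S} x^s`. -/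
noncomputable def P (S : NumericalSemigroup) : Polynomial ℤ :=
  1 + (X - 1) * ∑ s ∈ S.finite_compl.toFinset, X ^ s

/-- The Frobenius number: the largest integer not in `S` (equal to `-1` when `S = ℕ`). -/
noncomputable def Frob (S : NumericalSemigroup) : ℤ :=
  (insert (-1 : ℤ) (S.finite_compl.toFinset.image fun n : ℕ => (n : ℤ))).max'
    (Finset.insert_nonempty _ _)

/-- The genus: the number of gaps of `S`. -/
noncomputable def genus (S : NumericalSemigroup) : ℕ := S.finite_compl.toFinset.card

/-- `S` viewed as a set of integers. -/
def intSet (S : NumericalSemigroup) : Set ℤ := (fun n : ℕ => (n : ℤ)) '' S.carrier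

/-- `S` is cyclotomic if every complex root of `P_S` lies in the closed unit disc. -/
def IsCyclotomicNS (S : NumericalSemigroup) : Prop :=
  ∀ z : ℂ, Polynomial.aeval z S.P = 0 → ‖z‖ ≤ 1

/-- `S` is symmetric if for every integer `z`, `z ∈ S ↔ F(S) - z ∉ S`. -/
def IsSymmetric (S : NumericalSemigroup) : Prop :=
  ∀ z : ℤ, z ∈ S.intSet ↔ S.Frob - z ∉ S.intSet

/-- The Apéry set of `S` with respect to `m`: elements `s ∈ S` with `s - m ∉ S`
(in particular all `s ∈ S` with `s < m`). -/
def Ap (S : NumericalSemigroup) (m : ℕ) : Set ℕ :=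
  {s ∈ S.carrier | ∀ t ∈ S.carrier, t + m ≠ s}

end NumericalSemigroup
section Aux

open Polynomial

private lemma aux_prod_le_one (t : Multiset ℝ) (h : ∀ x ∈ t, 0 ≤ x ∧ x ≤ 1) :
    0 ≤ t.prod ∧ t.prod ≤ 1 := by
  induction t using Multiset.induction with
  | empty => simp
  | cons a t ih =>
    obtain ⟨ha0, ha1⟩ := h a (Multiset.mem_cons_self a t)
    obtain ⟨h0, h1⟩ := ih fun x hx => h x (Multiset.mem_cons_of_mem hx)
    rw [Multiset.prod_cons]
    constructor
    · exact mul_nonneg ha0 h0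
    · calc a * t.prod ≤ 1 * 1 := mul_le_mul ha1 h1 h0 zero_le_one
        _ = 1 := one_mul 1

private lemma aux_all_eq_one (t : Multiset ℝ) (h : ∀ x ∈ t, 0 ≤ x ∧ x ≤ 1)
    (hp : t.prod = 1) : ∀ x ∈ t, x = 1 := by
  intro x hx
  obtain ⟨ha0, ha1⟩ := h x hx
  obtain ⟨h0, h1⟩ := aux_prod_le_one (t.erase x)
    (fun y hy => h y (Multiset.mem_of_mem_erase hy))
  have hcons : x ::ₘ t.erase x = t := Multiset.cons_erase hx
  have hxp : x * (t.erase x).prod = 1 := by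
    rw [← Multiset.prod_cons, hcons, hp]
  have : (1 : ℝ) ≤ x := by
    calc (1:ℝ) = x * (t.erase x).prod := hxp.symm
      _ ≤ x * 1 := mul_le_mul_of_nonneg_left h1 ha0
      _ = x := mul_one x
  linarith

private lemma aux_reflect_prod (t : Multiset ℂ) :
    reflect (Multiset.card t) (t.map (fun a => X - C a)).prod
      = (t.map (fun a => 1 - C a * X)).prod := by
  induction t using Multiset.induction with
  | empty =>
    simp only [Multiset.map_zero, Multiset.prod_zero, Multiset.card_zero]
    rw [← C_1, ← mul_one (C (1:ℂ)), ← pow_zero (X : ℂ[X]), reflect_C_mul_X_pow]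
    simp
  | cons a t ih =>
    simp only [Multiset.map_cons, Multiset.prod_cons, Multiset.card_cons]
    rw [show Multiset.card t + 1 = 1 + Multiset.card t from add_comm _ _]
    rw [reflect_mul _ _ (le_of_eq (natDegree_X_sub_C a))
      (le_of_eq (natDegree_multiset_prod_X_sub_C_eq_card t))]
    rw [ih]
    congr 1
    have h1 : (X - C a : ℂ[X]) = X ^ 1 + C (-a) * X ^ 0 := by
      simp [sub_eq_add_neg]
    rw [h1, reflect_add, reflect_monomial, reflect_C_mul_X_pow]
    have r1 : revAt 1 1 = 0 := by simp [revAt_le]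
    have r0 : revAt 1 0 = 1 := by simp [revAt_le]
    rw [r1, r0]
    simp [sub_eq_add_neg]

end Aux
section MainAux

open Polynomial NumericalSemigroup

private lemma aux_P_coeff_zero (S : NumericalSemigroup) : S.P.coeff 0 = 1 := by
  unfold NumericalSemigroup.P
  rw [coeff_add, coeff_one, mul_coeff_zero, finset_sum_coeff]
  have h0 : (0 : ℕ) ∉ S.finite_compl.toFinset := by
    simp [S.zero_mem]
  have : ∑ s ∈ S.finite_compl.toFinset, (X ^ s : ℤ[X]).coeff 0 = 0 := by
    apply Finset.sum_eq_zero
    intro s hs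
    rw [coeff_X_pow]
    have : s ≠ 0 := by rintro rfl; exact h0 hs
    simp [this.symm]
  rw [this]
  simp

private lemma aux_P_monic (S : NumericalSemigroup) : S.P.Monic := by
  unfold NumericalSemigroup.P
  rcases Finset.eq_empty_or_nonempty S.finite_compl.toFinset with he | hne
  · rw [he]
    simp
  · set G := S.finite_compl.toFinset with hG
    set M := G.max' hne with hM
    set g : ℤ[X] := ∑ s ∈ G, X ^ s with hg
    have hgd : g.natDegree ≤ M := by
      apply natDegree_sum_le_of_forall_le
      intro s hs
      simpa [natDegree_X_pow] using Finset.le_max' G s hs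
    have hgc : g.coeff M = 1 := by
      rw [hg, finset_sum_coeff]
      have : ∀ s ∈ G, (X ^ s : ℤ[X]).coeff M = if M = s then 1 else 0 := by
        intro s _; exact coeff_X_pow s M
      rw [Finset.sum_congr rfl this, Finset.sum_ite_eq]
      simp [hM, G.max'_mem hne]
    have hgm : g.Monic := monic_of_natDegree_le_of_coeff_eq_one M hgd hgc
    have hXm : ((X : ℤ[X]) - 1).Monic := by
      simpa using monic_X_sub_C (1 : ℤ)
    have hmul : ((X - 1) * g).Monic := hXm.mul hgm
    have hdeg : 0 < ((X - 1) * g : ℤ[X]).natDegree := by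
      rw [hXm.natDegree_mul hgm]
      have : ((X : ℤ[X]) - 1).natDegree = 1 := by simpa using natDegree_X_sub_C (1 : ℤ)
      omega
    have : ((X - 1) * g + 1 : ℤ[X]).Monic := by
      apply hmul.add_of_left
      calc (1 : ℤ[X]).degree ≤ 0 := degree_one_le
        _ < ((X - 1) * g : ℤ[X]).degree := natDegree_pos_iff_degree_pos.mp hdeg
    simpa [add_comm] using this

end MainAux

open NumericalSemigroup in
/-- If `S` is cyclotomic, then `P_S` is selfreciprocal: the coefficient of `x^i` equals
the coefficient of `x^{deg P_S - i}` for all `0 ≤ i ≤ deg P_S`. -/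
theorem cyclotomic_selfreciprocal (S : NumericalSemigroup) (h : S.IsCyclotomicNS) :
    ∀ i ≤ S.P.natDegree, S.P.coeff i = S.P.coeff (S.P.natDegree - i) := by
  intro i hi
  have hm : S.P.Monic := aux_P_monic S
  have hc0 : S.P.coeff 0 = 1 := aux_P_coeff_zero S
  set f : ℤ →+* ℂ := Int.castRingHom ℂ with hf
  set p : ℂ[X] := S.P.map f with hp
  have hpm : p.Monic := hm.map f
  have hnd : p.natDegree = S.P.natDegree := hm.natDegree_map f
  have hsplits : p.Splits := IsAlgClosed.splits p
  have hcard : Multiset.card p.roots = p.natDegree := splits_iff_card_roots.mp hsplits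
  have hc0p : p.coeff 0 = 1 := by rw [hp, coeff_map, hc0]; simp
  have hprod : p.roots.prod = (-1) ^ p.natDegree := by
    have := hsplits.coeff_zero_eq_prod_roots_of_monic hpm
    rw [hc0p] at this
    have h2 : ((-1 : ℂ) ^ p.natDegree) * ((-1 : ℂ) ^ p.natDegree) = 1 := by
      rw [← pow_add]; simp [pow_mul_comm, ← two_mul, pow_mul]
    calc p.roots.prod = ((-1:ℂ)^p.natDegree * (-1:ℂ)^p.natDegree) * p.roots.prod := by
          rw [h2, one_mul]
      _ = (-1:ℂ)^p.natDegree * ((-1:ℂ)^p.natDegree * p.roots.prod) := by ring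
      _ = (-1:ℂ)^p.natDegree := by rw [← this, mul_one]
  -- every root has absolute value one
  have habs : ∀ z ∈ p.roots, ‖z‖ = 1 := by
    have hle : ∀ x ∈ p.roots.map (fun z => ‖z‖), 0 ≤ x ∧ x ≤ 1 := by
      intro x hx
      obtain ⟨z, hz, rfl⟩ := Multiset.mem_map.mp hx
      refine ⟨norm_nonneg _, ?_⟩
      apply h
      have hroot : p.IsRoot z := isRoot_of_mem_roots hz
      rw [aeval_def, ← eval_map]
      exact hroot
    have hprodabs : (p.roots.map (fun z => ‖z‖)).prod = 1 := by
      rw [show (p.roots.map (fun z => ‖z‖)).prod = ‖p.roots.prod‖ from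
        (map_multiset_prod (normHom (α := ℂ)) p.roots).symm, hprod]
      simp
    intro z hz
    exact aux_all_eq_one _ hle hprodabs ‖z‖
      (Multiset.mem_map_of_mem _ hz)
  -- conjugation fixes the root multiset
  have hconjp : p.map (starRingEnd ℂ) = p := by
    rw [hp, Polynomial.map_map, RingHom.ext_int ((starRingEnd ℂ).comp f) f]
  have hconjroots : p.roots.map (starRingEnd ℂ) = p.roots := by
    have := hsplits.roots_map (starRingEnd ℂ)
    rw [hconjp] at this
    exact this.symm
  -- the reflection identity over ℂ
  have heq : p = (p.roots.map fun a => X - C a).prod :=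
    hsplits.eq_prod_roots_of_monic hpm
  have hrefl : reflect p.natDegree p = p := by
    have key := aux_reflect_prod p.roots
    rw [← heq, hcard] at key
    rw [key]
    have hstep : (p.roots.map fun a => (1 : ℂ[X]) - C a * X)
        = p.roots.map fun a => C (-a) * (X - C (starRingEnd ℂ a)) := by
      apply Multiset.map_congr rfl
      intro a ha
      have hmc : a * (starRingEnd ℂ a) = 1 := by
        rw [Complex.mul_conj]
        rw [Complex.normSq_eq_norm_sq, habs a ha]
        simp
      rw [map_neg, neg_mul, mul_sub, ← C_mul, hmc, C_1]
      ring
    rw [hstep]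
    have hsplit2 : (p.roots.map fun a => C (-a) * (X - C (starRingEnd ℂ a))).prod
        = (p.roots.map fun a => (C (-a) : ℂ[X])).prod
          * (p.roots.map fun a => X - C (starRingEnd ℂ a)).prod :=
      Multiset.prod_map_mul
    rw [hsplit2]
    have h1 : (p.roots.map fun a => (C (-a) : ℂ[X])).prod = 1 := by
      have : (p.roots.map fun a => (C (-a) : ℂ[X])) = (p.roots.map Neg.neg).map C := by
        rw [Multiset.map_map]; rfl
      rw [this, ← map_multiset_prod, Multiset.prod_map_neg, hprod, hcard, ← pow_add]
      simp [← two_mul, pow_mul]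
    have h2 : (p.roots.map fun a => X - C (starRingEnd ℂ a)).prod = p := by
      have : (p.roots.map fun a => (X : ℂ[X]) - C (starRingEnd ℂ a))
          = (p.roots.map (starRingEnd ℂ)).map fun a => X - C a := by
        rw [Multiset.map_map]; rfl
      rw [this, hconjroots, ← heq]
    rw [h1, h2, one_mul]
  -- transfer back to ℤ
  have hcoeff : p.coeff i = p.coeff (p.natDegree - i) := by
    conv_lhs => rw [← hrefl]
    rw [coeff_reflect, revAt_le (hnd ▸ hi)]
  rw [hp, coeff_map, coeff_map, hnd] at hcoeff
  exact Int.cast_injective (α := ℂ) hcoeff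
end

section
/- If S is a cyclotomic numerical semigroup, then S is symmetric. -/
open Polynomial
open scoped Classical

private lemma abs_prod_le_one (m : Multiset ℂ) (h : ∀ r ∈ m, ‖r‖ ≤ 1) :
    ‖m.prod‖ ≤ 1 := by
  induction m using Multiset.induction_on with
  | empty => simp
  | cons a t ih =>
    rw [Multiset.prod_cons, norm_mul]
    have ha := h a (Multiset.mem_cons_self a t)
    have ht := ih fun r hr => h r (Multiset.mem_cons_of_mem hr)
    have h1 := norm_nonneg a
    have h2 := norm_nonneg t.prod
    nlinarith

private lemma abs_eq_one_of_prod (m : Multiset ℂ) (h : ∀ r ∈ m, ‖r‖ ≤ 1)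
    (hp : ‖m.prod‖ = 1) : ∀ r ∈ m, ‖r‖ = 1 := by
  induction m using Multiset.induction_on with
  | empty => simp
  | cons a t ih =>
    have ha := h a (Multiset.mem_cons_self a t)
    have ht' : ∀ r ∈ t, ‖r‖ ≤ 1 := fun r hr => h r (Multiset.mem_cons_of_mem hr)
    have ht := abs_prod_le_one t ht'
    rw [Multiset.prod_cons, norm_mul] at hp
    have h1 := norm_nonneg a
    have h2 := norm_nonneg t.prod
    have haa : ‖a‖ = 1 := by nlinarith
    have htt : ‖t.prod‖ = 1 := by nlinarith
    intro r hr
    rcases Multiset.mem_cons.mp hr with rfl | hr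
    · exact haa
    · exact ih ht' htt r hr

private lemma reverse_multiset_prod (m : Multiset ℂ[X]) :
    m.prod.reverse = (m.map Polynomial.reverse).prod := by
  induction m using Multiset.induction_on with
  | empty => simp [Polynomial.reverse]
  | cons a t ih =>
    rw [Multiset.prod_cons, Multiset.map_cons, Multiset.prod_cons,
      Polynomial.reverse_mul_of_domain, ih]

private lemma reverse_X_sub_C (r : ℂ) (hr : r ≠ 0) :
    (X - C r).reverse = C (-r) * (X - C r⁻¹) := by
  have h1 : (X - C r).reverse = 1 - C r * X := by
    unfold Polynomial.reverse
    rw [natDegree_X_sub_C, reflect_sub]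
    have hx : reflect 1 (X : ℂ[X]) = 1 := by
      have := reflect_monomial 1 1 (R := ℂ)
      simpa [revAt_le] using this
    have hc : reflect 1 (C r) = C r * X := by
      have : (C r : ℂ[X]) = C r * X ^ 0 := by ring
      rw [this, reflect_C_mul_X_pow]
      simp [revAt_le]
    rw [hx, hc]
  rw [h1, mul_sub, ← C_mul]
  have : -r * r⁻¹ = -1 := by field_simp
  rw [this, map_neg, map_neg, map_one]
  ring

open NumericalSemigroup in
/-- If `S` is a cyclotomic numerical semigroup, then `S` is symmetric. -/
theorem cyclotomic_implies_symmetric (S : NumericalSemigroup) (h : S.IsCyclotomicNS) :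
    S.IsSymmetric := by
  set G := S.finite_compl.toFinset with hGdef
  have hG : ∀ s : ℕ, s ∈ G ↔ s ∉ S.carrier := by
    intro s
    rw [hGdef, Set.Finite.mem_toFinset, Set.mem_compl_iff]
  set f : ℕ → ℤ := fun k => if k ∈ S.carrier then 1 else 0 with hfdef
  have hQ : ∀ j : ℕ, (∑ s ∈ G, (X : ℤ[X]) ^ s).coeff j = 1 - f j := by
    intro j
    rw [finset_sum_coeff]
    simp only [coeff_X_pow]
    rw [Finset.sum_ite_eq G j (fun _ => (1:ℤ))]
    by_cases hj : j ∈ S.carrier <;> simp [hG, hj, hfdef]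
  have hcoeff0 : S.P.coeff 0 = 1 := by
    rw [NumericalSemigroup.P, coeff_add, coeff_one]
    rw [sub_mul, coeff_sub, one_mul, mul_coeff_zero, coeff_X_zero, zero_mul]
    have h0 : (∑ s ∈ G, (X : ℤ[X]) ^ s).coeff 0 = 1 - f 0 := hQ 0
    have : f 0 = 1 := by simp [hfdef, S.zero_mem]
    rw [hGdef] at h0
    rw [h0, this]
    norm_num
  have hcoeffS : ∀ k : ℕ, S.P.coeff (k + 1) = f (k + 1) - f k := by
    intro k
    have h1 : (∑ s ∈ G, (X : ℤ[X]) ^ s).coeff k = 1 - f k := hQ k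
    have h2 : (∑ s ∈ G, (X : ℤ[X]) ^ s).coeff (k+1) = 1 - f (k+1) := hQ (k+1)
    rw [hGdef] at h1 h2
    rw [NumericalSemigroup.P, coeff_add, coeff_one, sub_mul, coeff_sub, one_mul,
      coeff_X_mul, h1, h2]
    simp
  have hnatmem : ∀ m : ℕ, ((m : ℤ) ∈ S.intSet ↔ m ∈ S.carrier) := by
    intro m
    constructor
    · rintro ⟨n, hn, hnm⟩
      have h2 : (n : ℤ) = (m : ℤ) := hnm
      have : n = m := by exact_mod_cast h2
      rwa [← this]
    · intro hm
      exact ⟨m, hm, rfl⟩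
  have hneg : ∀ z : ℤ, z < 0 → z ∉ S.intSet := by
    rintro z hz ⟨n, _, hn⟩
    have : (n : ℤ) = z := hn
    omega
  by_cases hGe : G = ∅
  · -- S = ℕ, Frob = -1
    have hFrob : S.Frob = -1 := by
      rw [NumericalSemigroup.Frob]
      apply le_antisymm
      · apply Finset.max'_le
        intro y hy
        rcases Finset.mem_insert.mp hy with rfl | hy
        · exact le_refl _
        · obtain ⟨n, hn, rfl⟩ := Finset.mem_image.mp hy
          rw [← hGdef, hGe] at hn
          exact absurd hn (Finset.notMem_empty n)
      · exact Finset.le_max' _ _ (Finset.mem_insert_self _ _)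
    have hall : ∀ m : ℕ, m ∈ S.carrier := by
      intro m
      by_contra hm
      have : m ∈ G := (hG m).mpr hm
      rw [hGe] at this
      exact absurd this (Finset.notMem_empty m)
    intro z
    rw [hFrob]
    constructor
    · rintro ⟨n, _, hn⟩ ⟨m, _, hm⟩
      have h1 : (n : ℤ) = z := hn
      have h2 : (m : ℤ) = -1 - z := hm
      omega
    · intro hz
      by_contra hznot
      apply hz
      have hzneg : z < 0 := by
        by_contra hzn
        push_neg at hzn
        exact hznot ⟨z.toNat, hall _, show ((z.toNat : ℤ)) = z by omega⟩
      exact ⟨(-1 - z).toNat, hall _, show (((-1 - z).toNat : ℤ)) = -1 - z by omega⟩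
  · -- G nonempty
    have hGne : G.Nonempty := Finset.nonempty_of_ne_empty hGe
    set F : ℕ := G.max' hGne with hFdef
    have hFnotin : F ∉ S.carrier := (hG F).mp (G.max'_mem hGne)
    have hgt : ∀ k : ℕ, F < k → k ∈ S.carrier := by
      intro k hk
      by_contra hknot
      exact absurd (G.le_max' k ((hG k).mpr hknot)) (by omega)
    have hFrob : S.Frob = (F : ℤ) := by
      rw [NumericalSemigroup.Frob]
      apply le_antisymm
      · apply Finset.max'_le
        intro y hy
        rcases Finset.mem_insert.mp hy with rfl | hy
        · omega
        · obtain ⟨n, hn, rfl⟩ := Finset.mem_image.mp hy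
          exact_mod_cast G.le_max' n hn
      · apply Finset.le_max'
        exact Finset.mem_insert_of_mem (Finset.mem_image.mpr ⟨F, G.max'_mem hGne, rfl⟩)
    have hfF : f F = 0 := by simp [hfdef, hFnotin]
    have hftop : ∀ k : ℕ, F < k → f k = 1 := fun k hk => by simp [hfdef, hgt k hk]
    have hcoeffn : S.P.coeff (F + 1) = 1 := by
      rw [hcoeffS F, hfF, hftop (F+1) (by omega)]
      ring
    have hdeg : S.P.natDegree = F + 1 := by
      apply le_antisymm
      · rw [natDegree_le_iff_coeff_eq_zero]
        intro N hN
        obtain ⟨j, rfl⟩ : ∃ j, N = j + 1 := ⟨N - 1, by omega⟩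
        rw [hcoeffS j, hftop j (by omega), hftop (j+1) (by omega)]
        ring
      · exact le_natDegree_of_ne_zero (by rw [hcoeffn]; exact one_ne_zero)
    have hmonic : S.P.Monic := by
      rw [Monic, leadingCoeff, hdeg, hcoeffn]
    -- complex part
    set Pc : ℂ[X] := S.P.map (Int.castRingHom ℂ) with hPcdef
    have hPcmonic : Pc.Monic := hmonic.map _
    have hPcdeg : Pc.natDegree = F + 1 := by
      rw [hPcdef, hmonic.natDegree_map, hdeg]
    have hPccoeff : ∀ j : ℕ, Pc.coeff j = (S.P.coeff j : ℂ) := by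
      intro j
      rw [hPcdef, coeff_map]
      simp
    have hsplits : Pc.Splits := IsAlgClosed.splits Pc
    have hcard : Multiset.card Pc.roots = F + 1 := by
      rw [splits_iff_card_roots.mp hsplits, hPcdeg]
    have habs_le : ∀ r ∈ Pc.roots, ‖r‖ ≤ 1 := by
      intro r hr
      apply h
      rw [aeval_def, ← eval_map, algebraMap_int_eq, ← hPcdef]
      exact isRoot_of_mem_roots hr
    have hcz : Pc.coeff 0 = 1 := by rw [hPccoeff 0, hcoeff0]; norm_num
    have hprodval : Pc.roots.prod = (-1 : ℂ) ^ (F + 1) := by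
      have hthis := hsplits.coeff_zero_eq_prod_roots_of_monic hPcmonic
      rw [hcz, hPcdeg] at hthis
      have h4 : Pc.roots.prod = (-1:ℂ)^(F+1) * ((-1:ℂ)^(F+1) * Pc.roots.prod) := by
        rw [← mul_assoc, ← pow_add]
        have he : (-1:ℂ)^((F+1)+(F+1)) = 1 := by
          rw [← two_mul, pow_mul]
          norm_num
        rw [he, one_mul]
      conv_lhs => rw [h4]
      rw [← hthis, mul_one]
    have habsprod : ‖Pc.roots.prod‖ = 1 := by
      rw [hprodval]
      simp
    have habs1 : ∀ r ∈ Pc.roots, ‖r‖ = 1 :=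
      abs_eq_one_of_prod Pc.roots habs_le habsprod
    have hrne : ∀ r ∈ Pc.roots, r ≠ 0 := by
      intro r hr h0
      have := habs1 r hr
      rw [h0] at this
      simp at this
    have hinv : ∀ r ∈ Pc.roots, r⁻¹ = (starRingEnd ℂ) r := by
      intro r hr
      rw [Complex.inv_def]
      have : Complex.normSq r = 1 := by
        have := habs1 r hr
        rw [← Complex.sq_norm, this]
        norm_num
      rw [this]
      simp
    have hmapconj : Pc.map (starRingEnd ℂ) = Pc := by
      rw [hPcdef, map_map]
      congr 1
      ext n
      simp
    have hconjroots : Pc.roots.map (starRingEnd ℂ) = Pc.roots := by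
      have := hsplits.roots_map (starRingEnd ℂ)
      rw [hmapconj] at this
      exact this.symm
    have hinvroots : Pc.roots.map (fun r => r⁻¹) = Pc.roots := by
      rw [Multiset.map_congr rfl hinv]
      exact hconjroots
    have hfact : Pc = (Pc.roots.map fun r => X - C r).prod :=
      (prod_multiset_X_sub_C_of_monic_of_roots_card_eq hPcmonic
        (by rw [hcard, hPcdeg])).symm
    have hrev : Pc.reverse = Pc := by
      conv_lhs => rw [hfact]
      rw [reverse_multiset_prod, Multiset.map_map]
      have hcongr : Pc.roots.map (Polynomial.reverse ∘ fun r => X - C r)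
          = Pc.roots.map (fun r => C (-r) * (X - C r⁻¹)) :=
        Multiset.map_congr rfl (fun r hr => reverse_X_sub_C r (hrne r hr))
      rw [hcongr]
      have hsplit2 : (Pc.roots.map (fun r => C (-r) * (X - C r⁻¹))).prod
          = (Pc.roots.map (fun r => (C (-r) : ℂ[X]))).prod
            * (Pc.roots.map (fun r => X - C r⁻¹)).prod := by
        rw [← Multiset.prod_map_mul]
      rw [hsplit2]
      have hfirst : (Pc.roots.map (fun r => (C (-r) : ℂ[X]))).prod = 1 := by
        have : (Pc.roots.map (fun r => (C (-r) : ℂ[X]))).prod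
            = C ((Pc.roots.map (fun r => -r)).prod) := by
          rw [map_multiset_prod (C : ℂ →+* ℂ[X]), Multiset.map_map]
          rfl
        rw [this]
        have hnegprod : (Pc.roots.map (fun r => -r)).prod = 1 := by
          have : (Pc.roots.map (fun r : ℂ => -r)).prod
              = (-1 : ℂ) ^ Multiset.card Pc.roots * Pc.roots.prod := by
            rw [Multiset.prod_map_neg]
          rw [this, hcard, hprodval, ← pow_add]
          simp [pow_mul]
        rw [hnegprod, map_one]
      have hsecond : (Pc.roots.map (fun r => X - C r⁻¹)).prod = Pc := by
        have : Pc.roots.map (fun r => X - C r⁻¹)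
            = (Pc.roots.map (fun r => r⁻¹)).map (fun r => X - C r) := by
          rw [Multiset.map_map]
          rfl
        rw [this, hinvroots, ← hfact]
      rw [hfirst, hsecond, one_mul]
    -- palindrome on integer coefficients
    have hpal : ∀ i : ℕ, i ≤ F + 1 → S.P.coeff i = S.P.coeff (F + 1 - i) := by
      intro i hi
      have h1 : Pc.reverse.coeff i = Pc.coeff (F + 1 - i) := by
        rw [coeff_reverse, hPcdeg, revAt_le hi]
      rw [hrev] at h1
      have h2 : (S.P.coeff i : ℂ) = (S.P.coeff (F + 1 - i) : ℂ) := by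
        rw [← hPccoeff, ← hPccoeff, h1]
      exact_mod_cast h2
    -- telescoping: f k + f (F - k) = 1 for k ≤ F
    have hsum : ∀ k : ℕ, k ≤ F → f k + f (F - k) = 1 := by
      intro k
      induction k with
      | zero =>
        intro _
        have : f 0 = 1 := by simp [hfdef, S.zero_mem]
        rw [Nat.sub_zero, this, hfF]
        ring
      | succ k ih =>
        intro hk
        have hk' : k ≤ F := by omega
        have hIH := ih hk'
        have e1 : S.P.coeff (k + 1) = f (k + 1) - f k := hcoeffS k
        have e2 : S.P.coeff (k + 1) = S.P.coeff (F - k) := by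
          have := hpal (k + 1) (by omega)
          rwa [show F + 1 - (k + 1) = F - k by omega] at this
        have e3 : S.P.coeff (F - k) = f (F - k) - f (F - (k + 1)) := by
          have := hcoeffS (F - (k + 1))
          rwa [show F - (k + 1) + 1 = F - k by omega] at this
        have : f (k + 1) - f k = f (F - k) - f (F - (k + 1)) := by
          rw [← e1, e2, e3]
        linarith
    have hkey : ∀ k : ℕ, k ≤ F → (k ∈ S.carrier ↔ (F - k) ∉ S.carrier) := by
      intro k hk
      have := hsum k hk
      by_cases h1 : k ∈ S.carrier <;> by_cases h2 : (F - k) ∈ S.carrier <;>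
        simp [hfdef, h1, h2] at this ⊢ <;> try tauto
      all_goals omega
    -- conclude
    intro z
    rw [hFrob]
    rcases lt_or_ge z 0 with hz | hz
    · constructor
      · intro hmem
        exact absurd hmem (hneg z hz)
      · intro hnot
        exfalso
        apply hnot
        have : (F : ℤ) - z = ((F - z).toNat : ℤ) := by omega
        rw [this]
        rw [hnatmem]
        apply hgt
        omega
    · obtain ⟨k, rfl⟩ : ∃ k : ℕ, z = (k : ℤ) := ⟨z.toNat, by omega⟩
      rcases le_or_gt k F with hkF | hkF
      · have hsub : (F : ℤ) - (k : ℤ) = ((F - k : ℕ) : ℤ) := by omega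
        rw [hsub, hnatmem, hnatmem]
        exact hkey k hkF
      · constructor
        · intro _
          intro hmem
          have : (F : ℤ) - (k : ℤ) < 0 := by omega
          exact hneg _ this hmem
        · intro _
          rw [hnatmem]
          exact hgt k hkF
end

section
/- Let a_1, a_2 ≥ 2 be coprime integers and let S = ⟨a_1, a_2⟩. Then (1−x^{a_1})(1−x^{a_2})·P_S(x) = (1−x)(1−x^{a_1 a_2}) as polynomials, and consequently P_S(x) = ∏ Φ_d(x), where the product is over all positive integers d dividing a_1 a_2 such that d divides neither a_1 nor a_2. -/
open Polynomial
open scoped Classical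

local notation "Y" => (PowerSeries.X : PowerSeries ℤ)

noncomputable def geomA (a : ℕ) : PowerSeries ℤ :=
  PowerSeries.mk fun n => if a ∣ n then 1 else 0

lemma one_sub_pow_mul_geomA (a : ℕ) (ha : 0 < a) : (1 - Y ^ a) * geomA a = 1 := by
  ext n
  rw [sub_mul, one_mul, map_sub, mul_comm, PowerSeries.coeff_mul_X_pow',
    PowerSeries.coeff_one]
  simp only [geomA, PowerSeries.coeff_mk]
  rcases eq_or_ne n 0 with rfl | hn
  · simp [Nat.not_le_of_lt ha]
  · by_cases hle : a ≤ n
    · have hiff : a ∣ n ↔ a ∣ n - a := by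
        constructor
        · exact fun h => Nat.dvd_sub h dvd_rfl
        · intro h
          have := Nat.dvd_add h (dvd_refl a)
          rwa [Nat.sub_add_cancel hle] at this
      simp only [hiff]; simp [hle, hn]
    · have hnd : ¬ a ∣ n := fun h => hle (Nat.le_of_dvd (Nat.pos_of_ne_zero hn) h)
      simp [hle, hn, hnd]

lemma H_factor (a₁ a₂ : ℕ) (h₁ : 0 < a₁) (hcop : Nat.Coprime a₁ a₂)
    (S : NumericalSemigroup)
    (hS : S.carrier = ↑(AddSubmonoid.closure ({a₁, a₂} : Set ℕ))) :
    S.H = geomA a₁ * ∑ j ∈ Finset.range a₁, Y ^ (j * a₂) := by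
  have hmem : ∀ n : ℕ, n ∈ S.carrier ↔ ∃ i j : ℕ, i * a₁ + j * a₂ = n := by
    intro n
    rw [hS]
    simpa [smul_eq_mul] using AddSubmonoid.mem_closure_pair a₁ a₂ n
  ext n
  rw [Finset.mul_sum, map_sum]
  have hterm : ∀ j, (PowerSeries.coeff n) (geomA a₁ * Y ^ (j * a₂))
      = if j * a₂ ≤ n ∧ a₁ ∣ n - j * a₂ then 1 else 0 := by
    intro j
    rw [PowerSeries.coeff_mul_X_pow', ite_and]
    simp [geomA]
  simp only [hterm, NumericalSemigroup.H, PowerSeries.coeff_mk]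
  by_cases hn : n ∈ S.carrier
  · obtain ⟨i, j', hij⟩ := (hmem n).mp hn
    rw [if_pos hn]
    have hjlt : j' % a₁ < a₁ := Nat.mod_lt _ h₁
    have hle : j' % a₁ * a₂ ≤ n := by
      calc j' % a₁ * a₂ ≤ j' * a₂ := Nat.mul_le_mul_right _ (Nat.mod_le _ _)
        _ ≤ n := by omega
    have hn2 : n = a₁ * (i + j' / a₁ * a₂) + j' % a₁ * a₂ := by
      have h := Nat.div_add_mod j' a₁
      calc n = i * a₁ + j' * a₂ := hij.symm
        _ = i * a₁ + (a₁ * (j' / a₁) + j' % a₁) * a₂ := by rw [h]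
        _ = a₁ * (i + j' / a₁ * a₂) + j' % a₁ * a₂ := by ring
    have hdvd : a₁ ∣ n - j' % a₁ * a₂ := by
      refine ⟨i + j' / a₁ * a₂, ?_⟩
      set m := a₁ * (i + j' / a₁ * a₂) with hm
      omega
    rw [Finset.sum_eq_single_of_mem (j' % a₁) (Finset.mem_range.mpr hjlt)]
    · rw [if_pos ⟨hle, hdvd⟩]
    · intro k hk hkj
      rw [if_neg]
      rintro ⟨hkle, hkdvd⟩
      apply hkj
      have h1 : k * a₂ ≡ n [MOD a₁] := (Nat.modEq_iff_dvd' hkle).mpr hkdvd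
      have h2 : j' % a₁ * a₂ ≡ n [MOD a₁] := (Nat.modEq_iff_dvd' hle).mpr hdvd
      have h3 : k * a₂ ≡ j' % a₁ * a₂ [MOD a₁] := h1.trans h2.symm
      have h4 : k ≡ j' % a₁ [MOD a₁] := Nat.ModEq.cancel_right_of_coprime hcop h3
      have hk' : k < a₁ := Finset.mem_range.mp hk
      simpa [Nat.ModEq, Nat.mod_eq_of_lt hk', Nat.mod_eq_of_lt hjlt] using h4
  · rw [if_neg hn]
    refine (Finset.sum_eq_zero fun k _ => ?_).symm
    rw [if_neg]
    rintro ⟨hkle, c, hc⟩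
    apply hn
    refine (hmem n).mpr ⟨c, k, ?_⟩
    have hmc : c * a₁ = a₁ * c := Nat.mul_comm _ _
    set m := a₁ * c with hm
    omega

lemma coe_P_eq (S : NumericalSemigroup) :
    (S.P : PowerSeries ℤ) = (1 - Y) * S.H := by
  have h3 : ((∑ s ∈ S.finite_compl.toFinset, (X : Polynomial ℤ) ^ s : Polynomial ℤ) :
      PowerSeries ℤ) = PowerSeries.mk fun n => if n ∈ S.carrier then 0 else 1 := by
    ext n
    rw [Polynomial.coeff_coe, Polynomial.finset_sum_coeff]
    simp only [Polynomial.coeff_X_pow, PowerSeries.coeff_mk]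
    rw [Finset.sum_ite_eq]
    simp [Set.Finite.mem_toFinset]
  have h1 : S.H + PowerSeries.mk (fun n => if n ∈ S.carrier then 0 else 1)
      = PowerSeries.mk fun _ => (1 : ℤ) := by
    ext n
    simp only [map_add, NumericalSemigroup.H, PowerSeries.coeff_mk]
    split_ifs <;> ring
  have h2 : (1 - Y) * PowerSeries.mk (fun _ => (1 : ℤ)) = 1 := by
    ext n
    cases n with
    | zero => simp
    | succ m =>
      rw [sub_mul, one_mul, map_sub, PowerSeries.coeff_succ_X_mul]
      simp
  have hG : PowerSeries.mk (fun n => if n ∈ S.carrier then 0 else 1)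
      = PowerSeries.mk (fun _ => (1 : ℤ)) - S.H := by rw [← h1]; ring
  rw [NumericalSemigroup.P]
  push_cast [Polynomial.coe_add, Polynomial.coe_mul, Polynomial.coe_sub,
    Polynomial.coe_one, Polynomial.coe_X, h3]
  rw [hG]
  linear_combination -h2



open NumericalSemigroup in
/-- For coprime `a₁, a₂ ≥ 2` and `S = ⟨a₁, a₂⟩`:
`(1-x^{a₁})(1-x^{a₂})·P_S(x) = (1-x)(1-x^{a₁a₂})`, and
`P_S = ∏ Φ_d` over all `d ∣ a₁a₂` with `d ∤ a₁` and `d ∤ a₂`. -/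
theorem semigroupPolynomial_two_generators (a₁ a₂ : ℕ) (h₁ : 2 ≤ a₁) (h₂ : 2 ≤ a₂)
    (hcop : Nat.Coprime a₁ a₂) (S : NumericalSemigroup)
    (hS : S.carrier = ↑(AddSubmonoid.closure ({a₁, a₂} : Set ℕ))) :
    (1 - (X : Polynomial ℤ) ^ a₁) * (1 - (X : Polynomial ℤ) ^ a₂) * S.P
        = (1 - X) * (1 - X ^ (a₁ * a₂)) ∧
    S.P = ∏ d ∈ (a₁ * a₂).divisors.filter fun d => ¬ d ∣ a₁ ∧ ¬ d ∣ a₂,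
        Polynomial.cyclotomic d ℤ := by
  have part1 : (1 - (X : Polynomial ℤ) ^ a₁) * (1 - (X : Polynomial ℤ) ^ a₂) * S.P
      = (1 - X) * (1 - X ^ (a₁ * a₂)) := by
    apply Polynomial.coe_injective
    show (((1 - (X : Polynomial ℤ) ^ a₁) * (1 - (X : Polynomial ℤ) ^ a₂) * S.P : Polynomial ℤ) :
        PowerSeries ℤ) = (((1 - X) * (1 - X ^ (a₁ * a₂)) : Polynomial ℤ) : PowerSeries ℤ)
    simp only [Polynomial.coe_mul, Polynomial.coe_sub, Polynomial.coe_one,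
      Polynomial.coe_pow, Polynomial.coe_X]
    rw [coe_P_eq, H_factor a₁ a₂ (by omega) hcop S hS]
    have hA := one_sub_pow_mul_geomA a₁ (by omega)
    have hB : (1 - Y ^ a₂) * ∑ j ∈ Finset.range a₁, Y ^ (j * a₂)
        = 1 - Y ^ (a₁ * a₂) := by
      have hg := geom_sum_mul (Y ^ a₂) a₁
      have hrw : ∀ j, Y ^ (j * a₂) = (Y ^ a₂) ^ j := by
        intro j; rw [← pow_mul, mul_comm]
      simp only [hrw]
      linear_combination -hg
    linear_combination ((1 - Y) * (1 - Y ^ a₂) * ∑ j ∈ Finset.range a₁, Y ^ (j * a₂)) * hA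
      + (1 - Y) * hB
  have key2 : (1 - (X : Polynomial ℤ) ^ a₁) * (1 - (X : Polynomial ℤ) ^ a₂)
      * ∏ d ∈ (a₁ * a₂).divisors.filter fun d => ¬ d ∣ a₁ ∧ ¬ d ∣ a₂,
          Polynomial.cyclotomic d ℤ
      = (1 - X) * (1 - X ^ (a₁ * a₂)) := by
    have hpos1 : 0 < a₁ := by omega
    have hpos2 : 0 < a₂ := by omega
    have hpos12 : 0 < a₁ * a₂ := Nat.mul_pos hpos1 hpos2
    have e1 := Polynomial.prod_cyclotomic_eq_X_pow_sub_one hpos1 ℤ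
    have e2 := Polynomial.prod_cyclotomic_eq_X_pow_sub_one hpos2 ℤ
    have eN := Polynomial.prod_cyclotomic_eq_X_pow_sub_one hpos12 ℤ
    have hinter : a₁.divisors ∩ a₂.divisors = {1} := by
      ext d
      simp only [Finset.mem_inter, Nat.mem_divisors, Finset.mem_singleton]
      constructor
      · rintro ⟨⟨hd1, -⟩, ⟨hd2, -⟩⟩
        have := Nat.dvd_gcd hd1 hd2
        rw [hcop] at this
        exact Nat.dvd_one.mp this
      · rintro rfl
        exact ⟨⟨one_dvd _, hpos1.ne'⟩, ⟨one_dvd _, hpos2.ne'⟩⟩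
    have hunion : a₁.divisors ∪ a₂.divisors
        = (a₁ * a₂).divisors.filter fun d => d ∣ a₁ ∨ d ∣ a₂ := by
      ext d
      simp only [Finset.mem_union, Nat.mem_divisors, Finset.mem_filter]
      constructor
      · rintro (⟨hd, -⟩ | ⟨hd, -⟩)
        · exact ⟨⟨hd.mul_right a₂, hpos12.ne'⟩, Or.inl hd⟩
        · exact ⟨⟨hd.mul_left a₁, hpos12.ne'⟩, Or.inr hd⟩
      · rintro ⟨-, hd | hd⟩
        · exact Or.inl ⟨hd, hpos1.ne'⟩
        · exact Or.inr ⟨hd, hpos2.ne'⟩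
    have hfilter : ((a₁ * a₂).divisors.filter fun d => ¬ (d ∣ a₁ ∨ d ∣ a₂))
        = (a₁ * a₂).divisors.filter fun d => ¬ d ∣ a₁ ∧ ¬ d ∣ a₂ := by
      apply Finset.filter_congr
      intro d _
      tauto
    have eS := Finset.prod_filter_mul_prod_filter_not (a₁ * a₂).divisors
      (fun d => d ∣ a₁ ∨ d ∣ a₂) (fun d => Polynomial.cyclotomic d ℤ)
    rw [hfilter] at eS
    have eU := Finset.prod_union_inter (s₁ := a₁.divisors) (s₂ := a₂.divisors)
      (f := fun d => Polynomial.cyclotomic d ℤ)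
    rw [hinter, Finset.prod_singleton, Polynomial.cyclotomic_one, hunion] at eU
    -- now assemble
    have lhs_eq : (1 - (X : Polynomial ℤ) ^ a₁) * (1 - X ^ a₂)
        = (∏ d ∈ a₁.divisors, Polynomial.cyclotomic d ℤ)
          * ∏ d ∈ a₂.divisors, Polynomial.cyclotomic d ℤ := by
      rw [e1, e2]; ring
    have rhs_eq : (1 - (X : Polynomial ℤ)) * (1 - X ^ (a₁ * a₂))
        = (X - 1) * ∏ d ∈ (a₁ * a₂).divisors, Polynomial.cyclotomic d ℤ := by
      rw [eN]; ring
    rw [lhs_eq, rhs_eq, ← eS]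
    linear_combination (-∏ d ∈ (a₁ * a₂).divisors.filter fun d => ¬ d ∣ a₁ ∧ ¬ d ∣ a₂,
      Polynomial.cyclotomic d ℤ) * eU
  have hne : ∀ a : ℕ, 2 ≤ a → (1 - (X : Polynomial ℤ) ^ a) ≠ 0 := by
    intro a ha
    refine sub_ne_zero.mpr fun h => ?_
    have := congrArg Polynomial.natDegree h
    rw [Polynomial.natDegree_one, Polynomial.natDegree_X_pow] at this
    omega
  refine ⟨part1, mul_left_cancel₀ (mul_ne_zero (hne a₁ h₁) (hne a₂ h₂)) ?_⟩
  rw [part1, key2]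
end

section
/- Let S = a_1 S_1 +_{a_1 a_2} a_2 S_2 be a gluing of numerical semigroups S_1 and S_2. Then (1−x^{a_1})(1−x^{a_2})·P_S(x) = (1−x)(1−x^{a_1 a_2})·P_{S_1}(x^{a_1})·P_{S_2}(x^{a_2}) as polynomials. -/
open Polynomial
open scoped Classical

section GluingAux
open NumericalSemigroup

private lemma NSmul_mem (T : NumericalSemigroup) {a : ℕ} (ha : a ∈ T.carrier) :
    ∀ k : ℕ, a * k ∈ T.carrier
  | 0 => by simpa using T.zero_mem
  | (k+1) => by
      have := T.add_mem (NSmul_mem T ha k) ha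
      simpa [Nat.mul_succ] using this

private lemma hexp_coeff (T : NumericalSemigroup) {a : ℕ} (ha : 0 < a) (n : ℕ) :
    PowerSeries.coeff n (T.Hexp a) = if a ∣ n ∧ n / a ∈ T.carrier then 1 else 0 := by
  have hiff : (∃ s ∈ T.carrier, n = a * s) ↔ (a ∣ n ∧ n / a ∈ T.carrier) := by
    constructor
    · rintro ⟨s, hs, rfl⟩
      exact ⟨⟨s, rfl⟩, by simpa [Nat.mul_div_cancel_left _ ha] using hs⟩
    · rintro ⟨⟨m, rfl⟩, hm⟩
      exact ⟨m, by simpa [Nat.mul_div_cancel_left _ ha] using hm, rfl⟩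
  simp [NumericalSemigroup.Hexp, hiff]

private lemma P_coeff (T : NumericalSemigroup) (m : ℕ) :
    T.P.coeff m = (if m ∈ T.carrier then 1 else 0)
      - (if 1 ≤ m ∧ m - 1 ∈ T.carrier then 1 else 0) := by
  have hG : ∀ k, (∑ s ∈ T.finite_compl.toFinset, (Polynomial.X : Polynomial ℤ) ^ s).coeff k
      = if k ∈ T.carrier then 0 else 1 := by
    intro k
    rw [Polynomial.finset_sum_coeff]
    simp only [Polynomial.coeff_X_pow]
    rw [Finset.sum_ite_eq T.finite_compl.toFinset k (fun _ => (1:ℤ))]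
    simp [Set.Finite.mem_toFinset]
  unfold NumericalSemigroup.P
  rw [Polynomial.coeff_add, sub_mul, one_mul, Polynomial.coeff_sub]
  cases m with
  | zero =>
    simp [hG, T.zero_mem, Polynomial.mul_coeff_zero]
  | succ k =>
    rw [Polynomial.coeff_X_mul, Polynomial.coeff_one, hG, hG]
    by_cases h1 : k ∈ T.carrier <;> by_cases h2 : (k+1) ∈ T.carrier <;>
      simp [h1, h2]

private lemma expand_P_coe (T : NumericalSemigroup) {a : ℕ} (ha : 0 < a) :
    ((Polynomial.expand ℤ a T.P : Polynomial ℤ) : PowerSeries ℤ)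
      = (1 - PowerSeries.X ^ a) * T.Hexp a := by
  ext n
  rw [Polynomial.coeff_coe, Polynomial.coeff_expand ha, sub_mul, one_mul, map_sub,
    PowerSeries.coeff_X_pow_mul', hexp_coeff T ha, hexp_coeff T ha]
  by_cases h : a ∣ n
  · obtain ⟨m, rfl⟩ := h
    have e1 : a * m / a = m := Nat.mul_div_cancel_left _ ha
    have e2 : a ≤ a * m ↔ 1 ≤ m := by
      constructor
      · intro hle
        by_contra hm
        have hm0 : m = 0 := by omega
        subst hm0
        simp at hle
        omega
      · intro hm
        exact Nat.le_mul_of_pos_right a hm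
    by_cases hm : 1 ≤ m
    · have e5 : a * m - a = a * (m - 1) := by
        have h1 : a ≤ a * m := e2.mpr hm
        zify [h1, hm]; ring
      have e7 : (a * m - a) / a = m - 1 := by rw [e5, Nat.mul_div_cancel_left _ ha]
      simp only [dvd_mul_right, if_pos, e1, true_and, e2, if_pos hm, e5, e7,
        Nat.mul_div_cancel_left _ ha]
      rw [P_coeff]
      simp [hm]
    · have h0 : m = 0 := by omega
      subst h0
      simp [P_coeff, T.zero_mem, ha.ne']
  · have h3 : ¬ (a ≤ n ∧ a ∣ (n - a)) := by
      rintro ⟨hle, hd⟩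
      apply h
      have hn : n = (n - a) + a := by omega
      rw [hn]; exact dvd_add hd dvd_rfl
    rw [if_neg h, if_neg (fun hc => h hc.1)]
    by_cases hle : a ≤ n
    · rw [if_pos hle, if_neg (fun hc => h3 ⟨hle, hc.1⟩)]; ring
    · rw [if_neg hle]; ring

private lemma apery_coeff (S₁ : NumericalSemigroup) {a₁ a₂ : ℕ} (ha₁ : 0 < a₁) (ha₂ : 0 < a₂)
    (h₂ : a₂ ∈ S₁.carrier) (n : ℕ) :
    PowerSeries.coeff n ((1 - PowerSeries.X ^ (a₁ * a₂)) * S₁.Hexp a₁)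
      = if ∃ u ∈ S₁.Ap a₂, n = a₁ * u then 1 else 0 := by
  rw [sub_mul, one_mul, map_sub, PowerSeries.coeff_X_pow_mul', hexp_coeff S₁ ha₁,
    hexp_coeff S₁ ha₁]
  by_cases h : a₁ ∣ n
  · obtain ⟨m, rfl⟩ := h
    have e1 : a₁ * m / a₁ = m := Nat.mul_div_cancel_left _ ha₁
    have hRHS : (∃ u ∈ S₁.Ap a₂, a₁ * m = a₁ * u) ↔
        (m ∈ S₁.carrier ∧ ¬(a₂ ≤ m ∧ m - a₂ ∈ S₁.carrier)) := by
      constructor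
      · rintro ⟨u, ⟨hu1, hu2⟩, he⟩
        have hum : u = m := (Nat.eq_of_mul_eq_mul_left ha₁ he).symm
        subst hum
        refine ⟨hu1, ?_⟩
        rintro ⟨hle, hmem⟩
        exact hu2 (u - a₂) hmem (by omega)
      · rintro ⟨hm, hnot⟩
        refine ⟨m, ⟨hm, ?_⟩, rfl⟩
        intro t ht he
        apply hnot
        have h1 : a₂ ≤ m := by omega
        have h2 : m - a₂ = t := by omega
        exact ⟨h1, by rw [h2]; exact ht⟩
    have hcl : m - a₂ ∈ S₁.carrier → a₂ ≤ m → m ∈ S₁.carrier := by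
      intro hmem hle
      have := S₁.add_mem hmem h₂
      rwa [Nat.sub_add_cancel hle] at this
    by_cases hle : a₁ * a₂ ≤ a₁ * m
    · have hle' : a₂ ≤ m := Nat.le_of_mul_le_mul_left hle ha₁
      have e5 : a₁ * m - a₁ * a₂ = a₁ * (m - a₂) := by zify [hle, hle']; ring
      have e7 : (a₁ * m - a₁ * a₂) / a₁ = m - a₂ := by
        rw [e5, Nat.mul_div_cancel_left _ ha₁]
      simp only [dvd_mul_right, true_and, e1, if_pos hle, e5, e7,
        Nat.mul_div_cancel_left _ ha₁, hRHS]
      by_cases h1 : m ∈ S₁.carrier <;> by_cases h2 : m - a₂ ∈ S₁.carrier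
      · simp [h1, h2, hle']
      · simp [h1, h2, hle']
      · exact absurd (hcl h2 hle') h1
      · simp [h1, h2, hle']
    · have hm2 : ¬ a₂ ≤ m := fun hc => hle (Nat.mul_le_mul_left a₁ hc)
      simp only [dvd_mul_right, true_and, e1, if_neg hle, hRHS]
      simp [hm2]
  · have h2' : ¬ (∃ u ∈ S₁.Ap a₂, n = a₁ * u) := by
      rintro ⟨u, _, he⟩
      exact h ⟨u, he⟩
    have h3 : a₁ * a₂ ≤ n → ¬ a₁ ∣ (n - a₁ * a₂) := by
      intro hle hd
      apply h
      have hn : n = (n - a₁ * a₂) + a₁ * a₂ := by omega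
      rw [hn]
      exact dvd_add hd (dvd_mul_right _ _)
    rw [if_neg (fun hc => h hc.1), if_neg h2']
    by_cases hle : a₁ * a₂ ≤ n
    · rw [if_pos hle, if_neg (fun hc => h3 hle hc.1)]; ring
    · rw [if_neg hle]; ring

private lemma ap_le_eq (S₁ : NumericalSemigroup) {a₁ a₂ : ℕ} (ha₁ : 0 < a₁)
    (hcop : Nat.Coprime a₁ a₂) (h₂ : a₂ ∈ S₁.carrier) {u v u' v' : ℕ}
    (hu1 : u ∈ S₁.carrier) (hu' : u' ∈ S₁.Ap a₂) (hle : u ≤ u')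
    (h : a₁ * u + a₂ * v = a₁ * u' + a₂ * v') : u = u' := by
  obtain ⟨hu'1, hu'2⟩ := hu'
  have hz : (a₁ : ℤ) * u + a₂ * v = a₁ * u' + a₂ * v' := by exact_mod_cast h
  have hd : (a₂ : ℤ) ∣ (a₁ : ℤ) * ((u' : ℤ) - u) := ⟨(v : ℤ) - v', by linear_combination -hz⟩
  have hc : IsCoprime (a₂ : ℤ) (a₁ : ℤ) := Nat.isCoprime_iff_coprime.mpr hcop.symm
  have hd2 : (a₂ : ℤ) ∣ ((u' : ℤ) - u) := hc.dvd_of_dvd_mul_left hd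
  have hd3 : a₂ ∣ u' - u := by
    have hcast : ((u' - u : ℕ) : ℤ) = (u' : ℤ) - u := by omega
    rwa [← hcast, Int.natCast_dvd_natCast] at hd2
  obtain ⟨k, hk⟩ := hd3
  match k, hk with
  | 0, hk => simp at hk; omega
  | (j+1), hk =>
    exfalso
    have ht : u + a₂ * j ∈ S₁.carrier := S₁.add_mem hu1 (NSmul_mem S₁ h₂ j)
    have hk' : u' = u + (a₂ * j + a₂) := by
      rw [Nat.mul_succ] at hk
      omega
    exact hu'2 (u + a₂ * j) ht (by omega)

private lemma ap_rep_exists (S₁ S₂ : NumericalSemigroup) {a₁ a₂ : ℕ} (ha₂ : 0 < a₂)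
    (h₁ : a₁ ∈ S₂.carrier) :
    ∀ s₁, s₁ ∈ S₁.carrier → ∀ s₂ ∈ S₂.carrier,
      ∃ u ∈ S₁.Ap a₂, ∃ v ∈ S₂.carrier, a₁ * s₁ + a₂ * s₂ = a₁ * u + a₂ * v := by
  intro s₁
  induction s₁ using Nat.strong_induction_on with
  | _ s₁ ih =>
    intro hs₁ s₂ hs₂
    by_cases hap : ∃ t ∈ S₁.carrier, t + a₂ = s₁
    · obtain ⟨t, ht, rfl⟩ := hap
      obtain ⟨u, hu, v, hv, he⟩ := ih t (by omega) ht (s₂ + a₁) (S₂.add_mem hs₂ h₁)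
      refine ⟨u, hu, v, hv, ?_⟩
      rw [← he]; ring
    · exact ⟨s₁, ⟨hs₁, fun t ht he => hap ⟨t, ht, he⟩⟩, s₂, hs₂, rfl⟩

private lemma key_series (S₁ S₂ S : NumericalSemigroup) {a₁ a₂ : ℕ}
    (ha₁ : 0 < a₁) (ha₂ : 0 < a₂) (hcop : Nat.Coprime a₁ a₂)
    (h₁ : a₁ ∈ S₂.carrier) (h₂ : a₂ ∈ S₁.carrier)
    (hS : S.carrier = {n | ∃ s₁ ∈ S₁.carrier, ∃ s₂ ∈ S₂.carrier, n = a₁ * s₁ + a₂ * s₂}) :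
    S.Hexp 1 = (1 - PowerSeries.X ^ (a₁ * a₂)) * S₁.Hexp a₁ * S₂.Hexp a₂ := by
  ext n
  rw [PowerSeries.coeff_mul]
  have hL : PowerSeries.coeff n (S.Hexp 1) = if n ∈ S.carrier then 1 else 0 := by
    simp [NumericalSemigroup.Hexp]
  rw [hL]
  have hterm : ∀ p : ℕ × ℕ,
      PowerSeries.coeff p.1 ((1 - PowerSeries.X ^ (a₁ * a₂)) * S₁.Hexp a₁) *
        PowerSeries.coeff p.2 (S₂.Hexp a₂)
      = if (∃ u ∈ S₁.Ap a₂, p.1 = a₁ * u) ∧ (∃ v ∈ S₂.carrier, p.2 = a₂ * v)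
          then 1 else 0 := by
    intro p
    rw [apery_coeff S₁ ha₁ ha₂ h₂]
    simp only [NumericalSemigroup.Hexp, PowerSeries.coeff_mk]
    by_cases h1 : ∃ u ∈ S₁.Ap a₂, p.1 = a₁ * u <;>
      by_cases h2 : ∃ v ∈ S₂.carrier, p.2 = a₂ * v <;> simp [h1, h2]
  by_cases hn : n ∈ S.carrier
  · rw [if_pos hn]
    have hn' := hn
    rw [hS] at hn'
    obtain ⟨s₁, hs₁, s₂, hs₂, rfl⟩ := hn'
    obtain ⟨u, hu, v, hv, he⟩ := ap_rep_exists S₁ S₂ ha₂ h₁ s₁ hs₁ s₂ hs₂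
    symm
    refine (Finset.sum_eq_single_of_mem (a₁ * u, a₂ * v)
      (Finset.HasAntidiagonal.mem_antidiagonal.mpr he.symm) ?_).trans ?_
    · rintro ⟨b1, b2⟩ hb hne
      rw [hterm]
      rw [if_neg]
      rintro ⟨⟨u', hu', rfl⟩, ⟨v', hv', rfl⟩⟩
      rw [Finset.HasAntidiagonal.mem_antidiagonal] at hb
      have heq : a₁ * u' + a₂ * v' = a₁ * u + a₂ * v := by rw [hb, he]
      have hu_eq : u' = u := by
        rcases le_total u' u with hle2 | hle2
        · exact ap_le_eq S₁ ha₁ hcop h₂ hu'.1 hu hle2 heq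
        · exact (ap_le_eq S₁ ha₁ hcop h₂ hu.1 hu' hle2 heq.symm).symm
      subst hu_eq
      have hv_eq : v' = v := Nat.eq_of_mul_eq_mul_left ha₂ (Nat.add_left_cancel heq)
      exact hne (by rw [hv_eq])
    · rw [hterm]
      exact if_pos ⟨⟨u, hu, rfl⟩, ⟨v, hv, rfl⟩⟩
  · rw [if_neg hn]
    symm
    refine Finset.sum_eq_zero ?_
    rintro ⟨b1, b2⟩ hb
    rw [hterm]
    rw [if_neg]
    rintro ⟨⟨u, hu, rfl⟩, ⟨v, hv, rfl⟩⟩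
    rw [Finset.HasAntidiagonal.mem_antidiagonal] at hb
    apply hn
    rw [hS, ← hb]
    exact ⟨u, hu.1, v, hv, rfl⟩


open NumericalSemigroup in
/-- For a gluing `S = a₁S₁ +_{a₁a₂} a₂S₂` of numerical semigroups:
`(1-x^{a₁})(1-x^{a₂})·P_S(x) = (1-x)(1-x^{a₁a₂})·P_{S₁}(x^{a₁})·P_{S₂}(x^{a₂})`. -/
theorem semigroupPolynomial_gluing (S₁ S₂ S : NumericalSemigroup) (a₁ a₂ : ℕ)
    (ha₁ : 0 < a₁) (ha₂ : 0 < a₂) (hcop : Nat.Coprime a₁ a₂)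
    (h₁ : a₁ ∈ S₂.carrier) (h₂ : a₂ ∈ S₁.carrier)
    (hS : S.carrier = {n | ∃ s₁ ∈ S₁.carrier, ∃ s₂ ∈ S₂.carrier, n = a₁ * s₁ + a₂ * s₂}) :
    (1 - (X : Polynomial ℤ) ^ a₁) * (1 - (X : Polynomial ℤ) ^ a₂) * S.P
      = (1 - X) * (1 - X ^ (a₁ * a₂)) *
        (Polynomial.expand ℤ a₁ S₁.P) * (Polynomial.expand ℤ a₂ S₂.P) := by
  have hP : (S.P : PowerSeries ℤ) = (1 - PowerSeries.X) * S.Hexp 1 := by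
    have h := expand_P_coe S (a := 1) one_pos
    rwa [Polynomial.expand_one, pow_one] at h
  rw [← Polynomial.coe_inj]
  simp only [Polynomial.coe_mul, Polynomial.coe_sub, Polynomial.coe_pow, Polynomial.coe_one,
    Polynomial.coe_X]
  rw [hP, expand_P_coe S₁ ha₁, expand_P_coe S₂ ha₂,
    key_series S₁ S₂ S ha₁ ha₂ hcop h₁ h₂ hS]
  ring


end GluingAux
end

section
/- Every complete intersection numerical semigroup is cyclotomic, i.e., every complex root of its semigroup polynomial lies in the closed unit disc |z| ≤ 1. -/
open Polynomial
open scoped Classical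

/-- Complete intersection numerical semigroups, defined recursively: `ℕ` is a complete
intersection, and a gluing `S = a₁S₁ +_{a₁a₂} a₂S₂` of two complete intersection
numerical semigroups is a complete intersection. -/
inductive IsCompleteIntersection : NumericalSemigroup → Prop
  | nat : ∀ S : NumericalSemigroup, S.carrier = Set.univ → IsCompleteIntersection S
  | gluing : ∀ (S S₁ S₂ : NumericalSemigroup) (a₁ a₂ : ℕ), 0 < a₁ → 0 < a₂ →
      Nat.Coprime a₁ a₂ → a₁ ∈ S₂.carrier → a₂ ∈ S₁.carrier →
      S.carrier = {n | ∃ s₁ ∈ S₁.carrier, ∃ s₂ ∈ S₂.carrier, n = a₁ * s₁ + a₂ * s₂} →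
      IsCompleteIntersection S₁ → IsCompleteIntersection S₂ → IsCompleteIntersection S

namespace CIAux

open NumericalSemigroup

/-- Multiples of an element stay in the semigroup. -/
lemma nmul_mem (T : NumericalSemigroup) {x : ℕ} (hx : x ∈ T.carrier) :
    ∀ k : ℕ, k * x ∈ T.carrier := by
  intro k
  induction k with
  | zero => simpa using T.zero_mem
  | succ k ih => rw [Nat.succ_mul]; exact T.add_mem ih hx

/-- The auxiliary power series `Σ_{w ∣ n} xⁿ`. -/
noncomputable def Eser (w : ℕ) : PowerSeries ℤ :=
  PowerSeries.mk fun n => if w ∣ n then 1 else 0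

lemma one_sub_pow_mul_Eser {w : ℕ} (hw : 0 < w) :
    (1 - (PowerSeries.X : PowerSeries ℤ) ^ w) * Eser w = 1 := by
  ext n
  rw [sub_mul, one_mul, map_sub, PowerSeries.coeff_X_pow_mul']
  simp only [Eser, PowerSeries.coeff_mk, PowerSeries.coeff_one]
  by_cases h1 : w ≤ n
  · have hne : n ≠ 0 := by omega
    have hiff : w ∣ n ↔ w ∣ n - w := by
      constructor
      · intro h; exact Nat.dvd_sub h dvd_rfl
      · intro h
        have : n = (n - w) + w := by omega
        rw [this]; exact Nat.dvd_add h dvd_rfl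
    rw [if_pos h1, if_neg hne]
    by_cases h2 : w ∣ n
    · rw [if_pos h2, if_pos (hiff.mp h2)]; ring
    · rw [if_neg h2, if_neg (fun hc => h2 (hiff.mpr hc))]; ring
  · rw [if_neg h1]
    by_cases h0 : n = 0
    · subst h0; rw [if_pos (dvd_zero w), if_pos rfl]; ring
    · have : ¬ w ∣ n := by
        intro hc
        have := Nat.le_of_dvd (Nat.pos_of_ne_zero h0) hc
        omega
      rw [if_neg this, if_neg h0]; ring

lemma gap_coe (T : NumericalSemigroup) {w : ℕ} (hw : 0 < w) :
    ((∑ s ∈ T.finite_compl.toFinset, (Polynomial.X : Polynomial ℤ) ^ (w * s) :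
        Polynomial ℤ) : PowerSeries ℤ) = Eser w - Hexp T w := by
  ext n
  rw [Polynomial.coeff_coe, Polynomial.finset_sum_coeff, map_sub]
  simp only [Polynomial.coeff_X_pow, Eser, Hexp, PowerSeries.coeff_mk]
  by_cases hdvd : w ∣ n
  · obtain ⟨k, rfl⟩ := hdvd
    have hcond : ∀ s : ℕ, (w * k = w * s) ↔ (s = k) := by
      intro s
      constructor
      · intro h; exact (Nat.eq_of_mul_eq_mul_left hw h).symm
      · rintro rfl; rfl
    rw [if_pos (dvd_mul_right w k)]
    by_cases hk : k ∈ T.carrier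
    · rw [if_pos ⟨k, hk, rfl⟩]
      have : ∀ s ∈ T.finite_compl.toFinset, (if w * k = w * s then (1:ℤ) else 0) = 0 := by
        intro s hs
        rw [if_neg]
        intro hc
        have := (hcond s).mp hc
        subst this
        exact (T.finite_compl.mem_toFinset.mp hs) hk
      rw [Finset.sum_congr rfl this, Finset.sum_const_zero]; ring
    · rw [if_neg]
      · have hmem : k ∈ T.finite_compl.toFinset := T.finite_compl.mem_toFinset.mpr hk
        rw [Finset.sum_eq_single k]
        · rw [if_pos rfl]; ring
        · intro s _ hsk
          rw [if_neg (fun hc => hsk ((hcond s).mp hc))]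
        · intro hc; exact absurd hmem hc
      · rintro ⟨s, hs, hc⟩
        have := (hcond s).mp hc
        subst this
        exact hk hs
  · have h1 : ∀ s ∈ T.finite_compl.toFinset, (if n = w * s then (1:ℤ) else 0) = 0 := by
      intro s _
      rw [if_neg]
      rintro rfl
      exact hdvd (dvd_mul_right w s)
    rw [Finset.sum_congr rfl h1, Finset.sum_const_zero, if_neg hdvd, if_neg]
    · ring
    · rintro ⟨s, _, rfl⟩
      exact hdvd (dvd_mul_right w s)

lemma P_comp_coe (T : NumericalSemigroup) {w : ℕ} (hw : 0 < w) :
    ((T.P.comp ((Polynomial.X : Polynomial ℤ) ^ w) : Polynomial ℤ) : PowerSeries ℤ)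
      = (1 - PowerSeries.X ^ w) * Hexp T w := by
  have hcomp : T.P.comp ((Polynomial.X : Polynomial ℤ) ^ w)
      = 1 + ((Polynomial.X : Polynomial ℤ) ^ w - 1) *
          ∑ s ∈ T.finite_compl.toFinset, (Polynomial.X : Polynomial ℤ) ^ (w * s) := by
    rw [NumericalSemigroup.P]
    rw [Polynomial.add_comp, Polynomial.one_comp, Polynomial.mul_comp,
      Polynomial.sub_comp, Polynomial.X_comp, Polynomial.one_comp]
    congr 1
    congr 1
    rw [Polynomial.sum_comp]
    apply Finset.sum_congr rfl
    intro s _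
    rw [Polynomial.pow_comp, Polynomial.X_comp, ← pow_mul]
  rw [hcomp]
  push_cast
  rw [gap_coe T hw]
  have hE := one_sub_pow_mul_Eser hw
  linear_combination -hE

lemma P_coe (T : NumericalSemigroup) :
    ((T.P : Polynomial ℤ) : PowerSeries ℤ) = (1 - PowerSeries.X) * Hexp T 1 := by
  have := P_comp_coe T (w := 1) one_pos
  simpa using this

end CIAux

namespace CIAux

open NumericalSemigroup

section Gluing

variable (S S₁ S₂ : NumericalSemigroup) (a₁ a₂ : ℕ)

/-- The set of representations of `n` as `a₁ s₁ + a₂ s₂`. -/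
noncomputable def Rset (n : ℕ) : Finset (ℕ × ℕ) :=
  (Finset.range (n + 1) ×ˢ Finset.range (n + 1)).filter fun p =>
    p.1 ∈ S₁.carrier ∧ p.2 ∈ S₂.carrier ∧ n = a₁ * p.1 + a₂ * p.2

variable {a₁ a₂}

lemma mem_Rset (ha₁ : 0 < a₁) (ha₂ : 0 < a₂) {n : ℕ} {q : ℕ × ℕ} :
    q ∈ Rset S₁ S₂ a₁ a₂ n ↔
      q.1 ∈ S₁.carrier ∧ q.2 ∈ S₂.carrier ∧ n = a₁ * q.1 + a₂ * q.2 := by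
  unfold Rset
  rw [Finset.mem_filter, Finset.mem_product, Finset.mem_range, Finset.mem_range]
  constructor
  · rintro ⟨-, h⟩; exact h
  · rintro ⟨h1, h2, h3⟩
    refine ⟨⟨?_, ?_⟩, h1, h2, h3⟩
    · have : q.1 ≤ a₁ * q.1 := Nat.le_mul_of_pos_left _ ha₁
      omega
    · have : q.2 ≤ a₂ * q.2 := Nat.le_mul_of_pos_left _ ha₂
      omega

lemma coeff_Hexp_mul (ha₁ : 0 < a₁) (ha₂ : 0 < a₂) (n : ℕ) :
    (PowerSeries.coeff n) (Hexp S₁ a₁ * Hexp S₂ a₂) =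
      ((Rset S₁ S₂ a₁ a₂ n).card : ℤ) := by
  rw [PowerSeries.coeff_mul]
  have step1 : ∀ p ∈ Finset.HasAntidiagonal.antidiagonal n,
      (PowerSeries.coeff p.1) (Hexp S₁ a₁) * (PowerSeries.coeff p.2) (Hexp S₂ a₂)
        = if ((∃ s ∈ S₁.carrier, p.1 = a₁ * s) ∧ (∃ s ∈ S₂.carrier, p.2 = a₂ * s))
            then (1:ℤ) else 0 := by
    intro p _
    simp only [Hexp, PowerSeries.coeff_mk]
    split_ifs with h1 h2 h3 <;> simp_all
  rw [Finset.sum_congr rfl step1, Finset.sum_boole]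
  norm_cast
  apply Finset.card_bij' (i := fun p _ => (p.1 / a₁, p.2 / a₂))
    (j := fun q _ => (a₁ * q.1, a₂ * q.2))
  · intro p hp
    rw [Finset.mem_filter, Finset.HasAntidiagonal.mem_antidiagonal] at hp
    obtain ⟨hsum, ⟨s, hs, hps⟩, ⟨t, ht, hpt⟩⟩ := hp
    have h1 : p.1 / a₁ = s := by rw [hps, Nat.mul_div_cancel_left s ha₁]
    have h2 : p.2 / a₂ = t := by rw [hpt, Nat.mul_div_cancel_left t ha₂]
    rw [mem_Rset S₁ S₂ ha₁ ha₂]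
    refine ⟨?_, ?_, ?_⟩
    · dsimp only; rw [h1]; exact hs
    · dsimp only; rw [h2]; exact ht
    · dsimp only; rw [h1, h2]; omega
  · intro q hq
    rw [mem_Rset S₁ S₂ ha₁ ha₂] at hq
    rw [Finset.mem_filter, Finset.HasAntidiagonal.mem_antidiagonal]
    refine ⟨?_, ⟨q.1, hq.1, rfl⟩, ⟨q.2, hq.2.1, rfl⟩⟩
    dsimp only
    omega
  · intro p hp
    rw [Finset.mem_filter] at hp
    obtain ⟨-, ⟨s, hs, hps⟩, ⟨t, ht, hpt⟩⟩ := hp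
    have h1 : p.1 / a₁ = s := by rw [hps, Nat.mul_div_cancel_left s ha₁]
    have h2 : p.2 / a₂ = t := by rw [hpt, Nat.mul_div_cancel_left t ha₂]
    ext
    · dsimp only; rw [h1]; exact hps.symm
    · dsimp only; rw [h2]; exact hpt.symm
  · intro q _
    ext
    · dsimp only; exact Nat.mul_div_cancel_left _ ha₁
    · dsimp only; exact Nat.mul_div_cancel_left _ ha₂

variable {S₁ S₂}

lemma exists_ap (ha₁ : 0 < a₁) (ha₂ : a₂ ∈ S₁.carrier) :
    ∀ s₂ s₁, s₁ ∈ S₁.carrier → s₂ ∈ S₂.carrier →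
    ∃ t₁ t₂, t₁ ∈ S₁.carrier ∧ t₂ ∈ S₂.carrier ∧ (∀ u ∈ S₂.carrier, u + a₁ ≠ t₂) ∧
      a₁ * s₁ + a₂ * s₂ = a₁ * t₁ + a₂ * t₂ := by
  intro s₂
  induction s₂ using Nat.strong_induction_on with
  | _ s₂ ih =>
    intro s₁ h₁ h₂
    by_cases hap : ∀ u ∈ S₂.carrier, u + a₁ ≠ s₂
    · exact ⟨s₁, s₂, h₁, h₂, hap, rfl⟩
    · push_neg at hap
      obtain ⟨u, hu, hue⟩ := hap
      have hlt : u < s₂ := by omega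
      obtain ⟨t₁, t₂, m1, m2, m3, m4⟩ := ih u hlt (s₁ + a₂) (S₁.add_mem h₁ ha₂) hu
      refine ⟨t₁, t₂, m1, m2, m3, ?_⟩
      rw [← m4, ← hue]; ring

lemma uniq_ap_aux (hcop : Nat.Coprime a₁ a₂) (ha₁pos : 0 < a₁) (ha₁ : a₁ ∈ S₂.carrier)
    {s₁ s₂ t₁ t₂ : ℕ} (hs₂ : s₂ ∈ S₂.carrier)
    (hapt : ∀ u ∈ S₂.carrier, u + a₁ ≠ t₂)
    (heq : a₁ * s₁ + a₂ * s₂ = a₁ * t₁ + a₂ * t₂) (hle : s₂ ≤ t₂) : s₂ = t₂ := by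
  have heqZ : (a₁ : ℤ) * s₁ + a₂ * s₂ = a₁ * t₁ + a₂ * t₂ := by exact_mod_cast heq
  have hdZ : (a₁ : ℤ) ∣ (a₂ : ℤ) * ((t₂ : ℤ) - s₂) := by
    refine ⟨(s₁ : ℤ) - t₁, ?_⟩
    linear_combination -heqZ
  have hcast : (a₂ : ℤ) * ((t₂ : ℤ) - s₂) = ((a₂ * (t₂ - s₂) : ℕ) : ℤ) := by
    push_cast [hle]; ring
  rw [hcast] at hdZ
  have hdN : a₁ ∣ a₂ * (t₂ - s₂) := Int.natCast_dvd_natCast.mp hdZ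
  have hd : a₁ ∣ t₂ - s₂ := hcop.dvd_of_dvd_mul_left hdN
  obtain ⟨k, hk⟩ := hd
  rcases k with _ | k
  · omega
  · exfalso
    have ht : t₂ = a₁ * (k + 1) + s₂ := by
      rw [← hk]; omega
    have humem : s₂ + k * a₁ ∈ S₂.carrier := S₂.add_mem hs₂ (nmul_mem S₂ ha₁ k)
    exact hapt _ humem (by rw [ht]; ring)

lemma uniq_ap (hcop : Nat.Coprime a₁ a₂) (ha₁pos : 0 < a₁) (ha₁ : a₁ ∈ S₂.carrier)
    {s₁ s₂ t₁ t₂ : ℕ} (hs₂ : s₂ ∈ S₂.carrier) (ht₂ : t₂ ∈ S₂.carrier)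
    (haps : ∀ u ∈ S₂.carrier, u + a₁ ≠ s₂) (hapt : ∀ u ∈ S₂.carrier, u + a₁ ≠ t₂)
    (heq : a₁ * s₁ + a₂ * s₂ = a₁ * t₁ + a₂ * t₂) : s₁ = t₁ ∧ s₂ = t₂ := by
  have h2 : s₂ = t₂ := by
    rcases le_total s₂ t₂ with h | h
    · exact uniq_ap_aux hcop ha₁pos ha₁ hs₂ hapt heq h
    · exact (uniq_ap_aux hcop ha₁pos ha₁ ht₂ haps heq.symm h).symm
  subst h2
  have : a₁ * s₁ = a₁ * t₁ := by omega
  exact ⟨Nat.eq_of_mul_eq_mul_left ha₁pos this, rfl⟩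

end Gluing

end CIAux

namespace CIAux

open NumericalSemigroup

section Gluing2

variable {S S₁ S₂ : NumericalSemigroup} {a₁ a₂ : ℕ}

lemma Ap_filter_card (ha₁ : 0 < a₁) (ha₂ : 0 < a₂) (hcop : Nat.Coprime a₁ a₂)
    (ha₁m : a₁ ∈ S₂.carrier) (ha₂m : a₂ ∈ S₁.carrier)
    (hS : S.carrier = {n | ∃ s₁ ∈ S₁.carrier, ∃ s₂ ∈ S₂.carrier, n = a₁ * s₁ + a₂ * s₂})
    (n : ℕ) :
    ((Rset S₁ S₂ a₁ a₂ n).filter fun p => ∀ u ∈ S₂.carrier, u + a₁ ≠ p.2).card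
      = if n ∈ S.carrier then 1 else 0 := by
  by_cases hn : n ∈ S.carrier
  · rw [if_pos hn]
    have hn' := hn
    rw [hS] at hn'
    obtain ⟨s₁, h₁, s₂, h₂, hrep⟩ := hn'
    obtain ⟨t₁, t₂, m1, m2, m3, m4⟩ := exists_ap ha₁ ha₂m s₂ s₁ h₁ h₂
    apply Finset.card_eq_one.mpr
    refine ⟨(t₁, t₂), ?_⟩
    ext q
    rw [Finset.mem_filter, mem_Rset S₁ S₂ ha₁ ha₂, Finset.mem_singleton]
    constructor
    · rintro ⟨⟨q1S, q2S, hq⟩, hqap⟩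
      have heq2 : a₁ * q.1 + a₂ * q.2 = a₁ * t₁ + a₂ * t₂ := by omega
      obtain ⟨e1, e2⟩ := uniq_ap hcop ha₁ ha₁m q2S m2 hqap m3 heq2
      exact Prod.ext e1 e2
    · rintro rfl
      refine ⟨⟨m1, m2, ?_⟩, m3⟩
      dsimp only
      omega
  · rw [if_neg hn]
    rw [Finset.card_eq_zero, Finset.eq_empty_iff_forall_notMem]
    intro q hq
    rw [Finset.mem_filter, mem_Rset S₁ S₂ ha₁ ha₂] at hq
    exact hn (hS ▸ ⟨q.1, hq.1.1, q.2, hq.1.2.1, hq.1.2.2⟩)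

lemma notAp_filter_card (ha₁ : 0 < a₁) (ha₂ : 0 < a₂) (ha₁m : a₁ ∈ S₂.carrier) (n : ℕ) :
    ((Rset S₁ S₂ a₁ a₂ n).filter fun p => ¬ ∀ u ∈ S₂.carrier, u + a₁ ≠ p.2).card
      = if a₁ * a₂ ≤ n then (Rset S₁ S₂ a₁ a₂ (n - a₁ * a₂)).card else 0 := by
  by_cases hm : a₁ * a₂ ≤ n
  · rw [if_pos hm]
    refine Finset.card_bij' (fun p _ => (p.1, p.2 - a₁)) (fun q _ => (q.1, q.2 + a₁))
      ?_ ?_ ?_ ?_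
    · intro p hp
      rw [Finset.mem_filter, mem_Rset S₁ S₂ ha₁ ha₂] at hp
      obtain ⟨⟨p1S, p2S, heq⟩, hnap⟩ := hp
      push_neg at hnap
      obtain ⟨u, hu, hue⟩ := hnap
      have hu2 : p.2 - a₁ = u := by omega
      rw [mem_Rset S₁ S₂ ha₁ ha₂]
      refine ⟨p1S, ?_, ?_⟩
      · dsimp only; rw [hu2]; exact hu
      · dsimp only
        rw [hu2]
        apply Nat.sub_eq_of_eq_add
        rw [heq, ← hue]; ring
    · intro q hq
      rw [mem_Rset S₁ S₂ ha₁ ha₂] at hq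
      obtain ⟨q1S, q2S, heq⟩ := hq
      rw [Finset.mem_filter, mem_Rset S₁ S₂ ha₁ ha₂]
      have hn' : n = (a₁ * q.1 + a₂ * q.2) + a₁ * a₂ := by
        rw [← heq]; omega
      refine ⟨⟨q1S, S₂.add_mem q2S ha₁m, ?_⟩, ?_⟩
      · dsimp only; rw [hn']; ring
      · intro hall
        exact hall q.2 q2S rfl
    · intro p hp
      rw [Finset.mem_filter, mem_Rset S₁ S₂ ha₁ ha₂] at hp
      obtain ⟨⟨p1S, p2S, heq⟩, hnap⟩ := hp
      push_neg at hnap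
      obtain ⟨u, hu, hue⟩ := hnap
      have : a₁ ≤ p.2 := by omega
      ext
      · rfl
      · dsimp only; omega
    · intro q _
      ext
      · rfl
      · dsimp only; omega
  · rw [if_neg hm]
    rw [Finset.card_eq_zero, Finset.eq_empty_iff_forall_notMem]
    intro q hq
    rw [Finset.mem_filter, mem_Rset S₁ S₂ ha₁ ha₂] at hq
    obtain ⟨⟨q1S, q2S, heq⟩, hnap⟩ := hq
    push_neg at hnap
    obtain ⟨u, hu, hue⟩ := hnap
    apply hm
    calc a₁ * a₂ = a₂ * a₁ := by ring
    _ ≤ a₂ * q.2 := Nat.mul_le_mul_left a₂ (by omega)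
    _ ≤ a₁ * q.1 + a₂ * q.2 := by omega
    _ = n := heq.symm

lemma Rset_card_rec (ha₁ : 0 < a₁) (ha₂ : 0 < a₂) (hcop : Nat.Coprime a₁ a₂)
    (ha₁m : a₁ ∈ S₂.carrier) (ha₂m : a₂ ∈ S₁.carrier)
    (hS : S.carrier = {n | ∃ s₁ ∈ S₁.carrier, ∃ s₂ ∈ S₂.carrier, n = a₁ * s₁ + a₂ * s₂})
    (n : ℕ) :
    (Rset S₁ S₂ a₁ a₂ n).card = (if n ∈ S.carrier then 1 else 0)
      + (if a₁ * a₂ ≤ n then (Rset S₁ S₂ a₁ a₂ (n - a₁ * a₂)).card else 0) := by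
  rw [← Ap_filter_card ha₁ ha₂ hcop ha₁m ha₂m hS n, ← notAp_filter_card ha₁ ha₂ ha₁m n]
  exact (Finset.card_filter_add_card_filter_not _).symm

lemma gluing_series (ha₁ : 0 < a₁) (ha₂ : 0 < a₂) (hcop : Nat.Coprime a₁ a₂)
    (ha₁m : a₁ ∈ S₂.carrier) (ha₂m : a₂ ∈ S₁.carrier)
    (hS : S.carrier = {n | ∃ s₁ ∈ S₁.carrier, ∃ s₂ ∈ S₂.carrier, n = a₁ * s₁ + a₂ * s₂}) :
    Hexp S₁ a₁ * Hexp S₂ a₂ * (1 - PowerSeries.X ^ (a₁ * a₂)) = Hexp S 1 := by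
  ext n
  rw [mul_sub, mul_one, map_sub, PowerSeries.coeff_mul_X_pow',
    coeff_Hexp_mul S₁ S₂ ha₁ ha₂ n]
  have hco : (PowerSeries.coeff n) (Hexp S 1) = if n ∈ S.carrier then 1 else 0 := by
    simp only [Hexp, PowerSeries.coeff_mk, one_mul]
    congr 1
    simp only [eq_iff_iff]
    constructor
    · rintro ⟨s, hs, rfl⟩; exact hs
    · intro h; exact ⟨n, h, rfl⟩
  rw [hco]
  rw [Rset_card_rec ha₁ ha₂ hcop ha₁m ha₂m hS n]
  by_cases hm : a₁ * a₂ ≤ n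
  · rw [if_pos hm, if_pos hm, coeff_Hexp_mul S₁ S₂ ha₁ ha₂]
    push_cast
    ring
  · rw [if_neg hm, if_neg hm]
    push_cast
    ring

lemma poly_identity (ha₁ : 0 < a₁) (ha₂ : 0 < a₂) (hcop : Nat.Coprime a₁ a₂)
    (ha₁m : a₁ ∈ S₂.carrier) (ha₂m : a₂ ∈ S₁.carrier)
    (hS : S.carrier = {n | ∃ s₁ ∈ S₁.carrier, ∃ s₂ ∈ S₂.carrier, n = a₁ * s₁ + a₂ * s₂}) :
    S.P * ((1 - Polynomial.X ^ a₁) * (1 - Polynomial.X ^ a₂))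
      = (S₁.P.comp (Polynomial.X ^ a₁)) * (S₂.P.comp (Polynomial.X ^ a₂))
        * ((1 - Polynomial.X ^ (a₁ * a₂)) * (1 - Polynomial.X)) := by
  apply Polynomial.coe_injective ℤ
  show ((S.P * ((1 - Polynomial.X ^ a₁) * (1 - Polynomial.X ^ a₂)) : Polynomial ℤ) :
      PowerSeries ℤ)
    = (((S₁.P.comp (Polynomial.X ^ a₁)) * (S₂.P.comp (Polynomial.X ^ a₂))
        * ((1 - Polynomial.X ^ (a₁ * a₂)) * (1 - Polynomial.X)) : Polynomial ℤ) :
      PowerSeries ℤ)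
  push_cast
  rw [P_coe S, P_comp_coe S₁ ha₁, P_comp_coe S₂ ha₂]
  have hglue := gluing_series ha₁ ha₂ hcop ha₁m ha₂m hS
  linear_combination (-(1 - (PowerSeries.X : PowerSeries ℤ)) *
    ((1 - PowerSeries.X ^ a₁) * (1 - PowerSeries.X ^ a₂))) * hglue

end Gluing2

end CIAux

open NumericalSemigroup in
/-- Every complete intersection numerical semigroup is cyclotomic. -/
theorem completeIntersection_isCyclotomic (S : NumericalSemigroup)
    (h : IsCompleteIntersection S) : S.IsCyclotomicNS := by
  induction h with
  | nat T hT =>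
    intro z hz
    exfalso
    have hempty : T.finite_compl.toFinset = ∅ := by
      rw [Set.Finite.toFinset_eq_empty, hT]
      simp
    rw [NumericalSemigroup.P, hempty] at hz
    simp at hz
  | gluing T S₁ S₂ a₁ a₂ ha₁ ha₂ hcop ha₁m ha₂m hT hci1 hci2 ih1 ih2 =>
    intro z hz
    have key := CIAux.poly_identity ha₁ ha₂ hcop ha₁m ha₂m hT
    have hz2 := congrArg (Polynomial.aeval z) key
    simp only [map_mul, map_sub, map_one, map_pow, Polynomial.aeval_X,
      Polynomial.aeval_comp, hz, zero_mul] at hz2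
    have hm0 : a₁ * a₂ ≠ 0 := by positivity
    rcases mul_eq_zero.mp hz2.symm with h12 | hcyc
    · rcases mul_eq_zero.mp h12 with h1 | h2
      · have := ih1 (z ^ a₁) h1
        rw [norm_pow] at this
        exact (pow_le_one_iff_of_nonneg (norm_nonneg z) (Nat.pos_iff_ne_zero.mp ha₁)).mp this
      · have := ih2 (z ^ a₂) h2
        rw [norm_pow] at this
        exact (pow_le_one_iff_of_nonneg (norm_nonneg z) (Nat.pos_iff_ne_zero.mp ha₂)).mp this
    · rcases mul_eq_zero.mp hcyc with h3 | h4
      · have hzpow : z ^ (a₁ * a₂) = 1 := by linear_combination -h3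
        have habs : ‖z‖ ^ (a₁ * a₂) = 1 := by
          rw [← norm_pow, hzpow, norm_one]
        by_contra hgt
        push_neg at hgt
        have := one_lt_pow₀ hgt hm0
        rw [habs] at this
        exact lt_irrefl 1 this
      · have hz1 : z = 1 := by linear_combination -h4
        rw [hz1]
        simp
end

section
/- Let n ≥ 2 and let (a_1, ..., a_n) be a smooth sequence of relatively prime positive integers, and let S = ⟨a_1, ..., a_n⟩. Then ∏_{i=1}^n (1−x^{a_i}) · P_S(x) = (1−x) · ∏_{i=2}^n (1−x^{c_i a_i}) as polynomials, where c_i = gcd(a_1,...,a_{i−1}) / gcd(a_1,...,a_i). -/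
open Polynomial
open scoped Classical

/-- `d_k = gcd(a_1, …, a_k)`. -/
def dseq (a : ℕ → ℕ) (k : ℕ) : ℕ := (Finset.Icc 1 k).gcd a

/-- `c_k = d_{k-1} / d_k`. -/
def cseq (a : ℕ → ℕ) (k : ℕ) : ℕ := dseq a (k - 1) / dseq a k

/-- The numerical semigroup (as a set) generated by `a_1, …, a_k`. -/
def gen (a : ℕ → ℕ) (k : ℕ) : Set ℕ := ↑(AddSubmonoid.closure (a '' Set.Icc 1 k))

/-- The sequence `(a_1, …, a_n)` is smooth if `c_k·a_k ∈ ⟨a_1, …, a_{k-1}⟩` for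
every `k = 2, …, n`. -/
def SmoothSeq (a : ℕ → ℕ) (n : ℕ) : Prop :=
  ∀ k, 2 ≤ k → k ≤ n → cseq a k * a k ∈ gen a (k - 1)

/- ==== auxiliary development ==== -/
section Aux

variable {a : ℕ → ℕ}

lemma zero_mem_gen (a : ℕ → ℕ) (k : ℕ) : 0 ∈ gen a k :=
  (AddSubmonoid.closure _).zero_mem

lemma gen_mono {k l : ℕ} (h : k ≤ l) : gen a k ⊆ gen a l :=
  AddSubmonoid.closure_mono (Set.image_mono (Set.Icc_subset_Icc le_rfl h))

lemma dseq_dvd_of_mem_gen {k m : ℕ} (hm : m ∈ gen a k) : dseq a k ∣ m := by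
  have hle : AddSubmonoid.closure (a '' Set.Icc 1 k) ≤
      { carrier := {m | dseq a k ∣ m},
        add_mem' := fun h1 h2 => dvd_add h1 h2,
        zero_mem' := dvd_zero _ } := by
    rw [AddSubmonoid.closure_le]
    rintro x ⟨i, hi, rfl⟩
    exact Finset.gcd_dvd (by simp only [Finset.mem_Icc]; exact ⟨hi.1, hi.2⟩)
  exact hle hm

lemma dseq_succ {k : ℕ} (hk : 1 ≤ k) :
    dseq a k = Nat.gcd (a k) (dseq a (k - 1)) := by
  have : Finset.Icc 1 k = insert k (Finset.Icc 1 (k - 1)) := by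
    ext x; simp only [Finset.mem_Icc, Finset.mem_insert]; omega
  rw [dseq, this, Finset.gcd_insert]
  rfl

lemma dseq_pos {n k : ℕ} (hpos : ∀ i, 1 ≤ i → i ≤ n → 0 < a i)
    (hk : 1 ≤ k) (hkn : k ≤ n) : 0 < dseq a k := by
  have h1 : dseq a k ∣ a k := Finset.gcd_dvd (by simp [Finset.mem_Icc]; omega)
  exact Nat.pos_of_dvd_of_pos h1 (hpos k hk hkn)

lemma dseq_dvd_prev {k : ℕ} (hk : 1 ≤ k) : dseq a k ∣ dseq a (k - 1) := by
  rw [dseq_succ hk]; exact Nat.gcd_dvd_right _ _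

lemma cseq_mul_dseq {k : ℕ} (hk : 1 ≤ k) :
    cseq a k * dseq a k = dseq a (k - 1) :=
  Nat.div_mul_cancel (dseq_dvd_prev hk)

lemma cseq_pos {n k : ℕ} (hpos : ∀ i, 1 ≤ i → i ≤ n → 0 < a i)
    (hk : 2 ≤ k) (hkn : k ≤ n) : 0 < cseq a k := by
  have hd := dseq_pos hpos (by omega : 1 ≤ k) hkn
  have hd' : 0 < dseq a (k - 1) := dseq_pos hpos (by omega) (by omega)
  exact Nat.div_pos (Nat.le_of_dvd hd' (dseq_dvd_prev (by omega))) hd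

lemma mem_gen_iff {k m : ℕ} (hk : 1 ≤ k) :
    m ∈ gen a k ↔ ∃ t ∈ gen a (k - 1), ∃ j : ℕ, m = t + j * a k := by
  have himg : a '' Set.Icc 1 k = (a '' Set.Icc 1 (k - 1)) ∪ {a k} := by
    rw [← Set.image_singleton, ← Set.image_union]
    have : Set.Icc 1 k = Set.Icc 1 (k - 1) ∪ {k} := by
      ext x; simp only [Set.mem_Icc, Set.mem_union, Set.mem_singleton_iff]; omega
    rw [this]
  unfold gen
  rw [himg, SetLike.mem_coe, AddSubmonoid.closure_union, AddSubmonoid.mem_sup]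
  constructor
  · rintro ⟨y, hy, z, hz, rfl⟩
    rw [AddSubmonoid.mem_closure_singleton] at hz
    obtain ⟨j, rfl⟩ := hz
    exact ⟨y, hy, j, by simp [smul_eq_mul]⟩
  · rintro ⟨t, ht, j, rfl⟩
    exact ⟨t, ht, j * a k, AddSubmonoid.mem_closure_singleton.2 ⟨j, by simp [smul_eq_mul]⟩, rfl⟩

lemma add_mul_mem_gen {k t j : ℕ} (hk : 1 ≤ k) (ht : t ∈ gen a (k - 1)) :
    t + j * a k ∈ gen a k :=
  (mem_gen_iff hk).2 ⟨t, ht, j, rfl⟩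

lemma gen_zero : gen a 0 = {0} := by
  unfold gen
  rw [Set.Icc_eq_empty (by omega), Set.image_empty, AddSubmonoid.closure_empty]
  rfl

/-- existence of a representation with small multiplier -/
lemma exists_rep {n k m : ℕ} (hsmooth : SmoothSeq a n)
    (hpos : ∀ i, 1 ≤ i → i ≤ n → 0 < a i)
    (hk : 2 ≤ k) (hkn : k ≤ n) (hm : m ∈ gen a k) :
    ∃ j, j < cseq a k ∧ j * a k ≤ m ∧ m - j * a k ∈ gen a (k - 1) := by
  obtain ⟨t, ht, i, rfl⟩ := (mem_gen_iff (by omega : 1 ≤ k)).1 hm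
  set c := cseq a k with hc
  have hcpos : 0 < c := cseq_pos hpos hk hkn
  have hca : c * a k ∈ gen a (k - 1) := hsmooth k hk hkn
  refine ⟨i % c, Nat.mod_lt _ hcpos, ?_, ?_⟩
  · have : i % c * a k ≤ i * a k := Nat.mul_le_mul_right _ (Nat.mod_le _ _)
    omega
  · have heq : t + i * a k - i % c * a k = t + (i / c) • (c * a k) := by
      have h1 : i = c * (i / c) + i % c := (Nat.div_add_mod i c).symm
      have h2 : (i / c) • (c * a k) = (i / c) * (c * a k) := by simp [smul_eq_mul]
      rw [h2]
      have : i * a k = (i / c) * (c * a k) + i % c * a k := by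
        calc i * a k = (c * (i / c) + i % c) * a k := by rw [← h1]
        _ = (i / c) * (c * a k) + i % c * a k := by ring
      omega
    rw [heq]
    exact (AddSubmonoid.closure _).add_mem ht
      ((AddSubmonoid.closure _).nsmul_mem hca _)

/-- uniqueness of the multiplier -/
lemma uniq_rep {n k m j j' : ℕ} (hpos : ∀ i, 1 ≤ i → i ≤ n → 0 < a i)
    (hk : 2 ≤ k) (hkn : k ≤ n)
    (hj : j < cseq a k) (hj' : j' < cseq a k)
    (hjm : j * a k ≤ m) (hjm' : j' * a k ≤ m)
    (h1 : m - j * a k ∈ gen a (k - 1)) (h2 : m - j' * a k ∈ gen a (k - 1)) :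
    j = j' := by
  have key : ∀ p q : ℕ, p ≤ q → q < cseq a k → p * a k ≤ m → q * a k ≤ m →
      m - p * a k ∈ gen a (k - 1) → m - q * a k ∈ gen a (k - 1) → q ≤ p := by
    intro p q hpq hq hpm hqm hp1 hq1
    have hD1 : dseq a (k - 1) ∣ m - p * a k := dseq_dvd_of_mem_gen hp1
    have hD2 : dseq a (k - 1) ∣ m - q * a k := dseq_dvd_of_mem_gen hq1
    have hsub : (m - p * a k) - (m - q * a k) = (q - p) * a k := by
      have : p * a k ≤ q * a k := Nat.mul_le_mul_right _ hpq
      have h3 : (q - p) * a k = q * a k - p * a k := by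
        rw [Nat.sub_mul]
      omega
    have hdvd : dseq a (k - 1) ∣ (q - p) * a k := by
      rw [← hsub]; exact Nat.dvd_sub hD1 hD2
    -- now deduce cseq a k ∣ q - p
    set D := dseq a (k - 1) with hD
    set g := dseq a k with hg
    have hgpos : 0 < g := dseq_pos hpos (by omega) hkn
    have hgD : g ∣ D := dseq_dvd_prev (by omega)
    have hgA : g ∣ a k := Finset.gcd_dvd (by simp [Finset.mem_Icc]; omega)
    have hgNat : g = Nat.gcd D (a k) := by
      rw [hg, dseq_succ (by omega : 1 ≤ k), Nat.gcd_comm]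
    have hcop : Nat.Coprime (D / g) (a k / g) := by
      rw [hgNat]; exact Nat.coprime_div_gcd_div_gcd (by rw [← hgNat]; exact hgpos)
    have hcD : cseq a k = D / g := rfl
    have hdvd2 : D / g ∣ (q - p) * (a k / g) := by
      have hA : a k = g * (a k / g) := (Nat.mul_div_cancel' hgA).symm
      have hDe : D = (D / g) * g := (Nat.div_mul_cancel hgD).symm
      rw [hDe] at hdvd
      rw [hA] at hdvd
      have : (q - p) * (g * (a k / g)) = ((q - p) * (a k / g)) * g := by ring
      rw [this] at hdvd
      exact (Nat.mul_dvd_mul_iff_right hgpos).1 hdvd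
    have hfin : D / g ∣ q - p := hcop.dvd_of_dvd_mul_right hdvd2
    rw [← hcD] at hfin
    have hlt : q - p < cseq a k := by omega
    have h0 := Nat.eq_zero_of_dvd_of_lt hfin hlt
    omega
  rcases le_total j j' with h | h
  · exact le_antisymm h (key j j' h hj' hjm hjm' h1 h2)
  · exact (le_antisymm h (key j' j h hj hjm' hjm h2 h1)).symm

end Aux

/- ==== power series ==== -/
noncomputable def Gser (a : ℕ → ℕ) (k : ℕ) : PowerSeries ℤ :=
  PowerSeries.mk fun m => if m ∈ gen a k then 1 else 0

section Series
variable {a : ℕ → ℕ}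

lemma mem_gen_one {m : ℕ} : m ∈ gen a 1 ↔ ∃ j : ℕ, m = j * a 1 := by
  rw [mem_gen_iff le_rfl]
  constructor
  · rintro ⟨t, ht, j, rfl⟩
    rw [show (1:ℕ) - 1 = 0 from rfl, gen_zero] at ht
    exact ⟨j, by simp [Set.mem_singleton_iff.1 ht]⟩
  · rintro ⟨j, rfl⟩
    exact ⟨0, by rw [show (1:ℕ) - 1 = 0 from rfl, gen_zero]; rfl, j, by ring⟩

lemma Gser_base (h : 0 < a 1) :
    Gser a 1 * (1 - PowerSeries.X ^ a 1) = 1 := by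
  ext m
  rw [mul_sub, mul_one, map_sub, PowerSeries.coeff_mul_X_pow']
  simp only [Gser, PowerSeries.coeff_mk, PowerSeries.coeff_one]
  rcases Nat.eq_zero_or_pos m with rfl | hm
  · have h0 : (0:ℕ) ∈ gen a 1 := zero_mem_gen a 1
    simp [h0, Nat.not_succ_le_zero, h]
    omega
  · have : ¬ m = 0 := by omega
    by_cases hmem : m ∈ gen a 1
    · obtain ⟨j, rfl⟩ := mem_gen_one.1 hmem
      have hj : 1 ≤ j := by
        rcases Nat.eq_zero_or_pos j with rfl | h'; · simp at hm
        · exact h'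
      have hle : a 1 ≤ j * a 1 := le_mul_of_one_le_left (by omega) hj
      have hmem' : j * a 1 - a 1 ∈ gen a 1 :=
        mem_gen_one.2 ⟨j - 1, by rw [Nat.sub_mul, one_mul]⟩
      simp [hmem, hle, hmem', this]
    · have hmem' : ¬ (a 1 ≤ m ∧ m - a 1 ∈ gen a 1) := by
        rintro ⟨hle, hmm⟩
        apply hmem
        obtain ⟨j, hj⟩ := mem_gen_one.1 hmm
        exact mem_gen_one.2 ⟨j + 1, by rw [Nat.succ_mul]; omega⟩
      by_cases hle : a 1 ≤ m
      · have : ¬ m - a 1 ∈ gen a 1 := fun hc => hmem' ⟨hle, hc⟩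
        simp [hmem, hle, this, ‹¬ m = 0›]
      · simp [hmem, hle, ‹¬ m = 0›]

lemma Gser_step {n k : ℕ} (hsmooth : SmoothSeq a n)
    (hpos : ∀ i, 1 ≤ i → i ≤ n → 0 < a i)
    (hk : 2 ≤ k) (hkn : k ≤ n) :
    Gser a k = Gser a (k - 1) *
      ∑ j ∈ Finset.range (cseq a k), PowerSeries.X ^ (j * a k) := by
  ext m
  rw [Finset.mul_sum, map_sum]
  simp only [PowerSeries.coeff_mul_X_pow', Gser, PowerSeries.coeff_mk]
  by_cases hm : m ∈ gen a k
  · obtain ⟨j₀, hj₀c, hj₀le, hj₀mem⟩ := exists_rep hsmooth hpos hk hkn hm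
    rw [if_pos hm]
    rw [Finset.sum_eq_single_of_mem j₀ (Finset.mem_range.2 hj₀c)]
    · simp [hj₀le, hj₀mem]
    · intro b hb hne
      split_ifs with h1 h2
      · exact absurd (uniq_rep hpos hk hkn (Finset.mem_range.1 hb) hj₀c h1 hj₀le h2 hj₀mem) hne
      · rfl
      · rfl
  · rw [if_neg hm, Finset.sum_eq_zero]
    intro j hj
    split_ifs with h1 h2
    · exfalso
      apply hm
      have : m = (m - j * a k) + j * a k := by omega
      rw [this]
      exact add_mul_mem_gen (by omega) h2
    · rfl
    · rfl

lemma Gser_mul {n k : ℕ} (hsmooth : SmoothSeq a n)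
    (hpos : ∀ i, 1 ≤ i → i ≤ n → 0 < a i)
    (hk : 2 ≤ k) (hkn : k ≤ n) :
    Gser a k * (1 - PowerSeries.X ^ a k)
      = Gser a (k - 1) * (1 - PowerSeries.X ^ (cseq a k * a k)) := by
  rw [Gser_step hsmooth hpos hk hkn, mul_assoc]
  congr 1
  have hgeom := geom_sum_mul (PowerSeries.X ^ a k : PowerSeries ℤ) (cseq a k)
  have hX : ∀ j : ℕ, (PowerSeries.X : PowerSeries ℤ) ^ (j * a k) = (PowerSeries.X ^ a k) ^ j := by
    intro j; rw [← pow_mul, Nat.mul_comm]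
  simp only [hX]
  linear_combination -hgeom

lemma telescope {n : ℕ} (hsmooth : SmoothSeq a n)
    (hpos : ∀ i, 1 ≤ i → i ≤ n → 0 < a i) :
    ∀ k, 1 ≤ k → k ≤ n →
      (∏ i ∈ Finset.Icc 1 k, (1 - (PowerSeries.X : PowerSeries ℤ) ^ a i)) * Gser a k
        = ∏ i ∈ Finset.Icc 2 k, (1 - (PowerSeries.X : PowerSeries ℤ) ^ (cseq a i * a i)) := by
  intro k
  induction k with
  | zero => omega
  | succ k ih =>
    intro _ hkn
    rcases Nat.eq_zero_or_pos k with rfl | hkpos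
    · simp only [Finset.Icc_self, Finset.prod_singleton]
      rw [Finset.Icc_eq_empty (by omega), Finset.prod_empty, mul_comm]
      exact Gser_base (hpos 1 le_rfl (by omega))
    · have h1 : Finset.Icc 1 (k+1) = insert (k+1) (Finset.Icc 1 k) := by
        ext x; simp only [Finset.mem_Icc, Finset.mem_insert]; omega
      have h2 : Finset.Icc 2 (k+1) = insert (k+1) (Finset.Icc 2 k) := by
        ext x; simp only [Finset.mem_Icc, Finset.mem_insert]; omega
      rw [h1, Finset.prod_insert (by simp [Finset.mem_Icc]), h2,
        Finset.prod_insert (by simp [Finset.mem_Icc])]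
      have hmul := Gser_mul (k := k + 1) hsmooth hpos (by omega) hkn
      simp only [Nat.add_sub_cancel] at hmul
      calc (1 - PowerSeries.X ^ a (k+1)) * (∏ i ∈ Finset.Icc 1 k, (1 - (PowerSeries.X : PowerSeries ℤ) ^ a i)) * Gser a (k+1)
          = (∏ i ∈ Finset.Icc 1 k, (1 - (PowerSeries.X : PowerSeries ℤ) ^ a i)) * (Gser a (k+1) * (1 - PowerSeries.X ^ a (k+1))) := by ring
        _ = (∏ i ∈ Finset.Icc 1 k, (1 - (PowerSeries.X : PowerSeries ℤ) ^ a i)) * (Gser a k * (1 - PowerSeries.X ^ (cseq a (k+1) * a (k+1)))) := by rw [hmul]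
        _ = ((∏ i ∈ Finset.Icc 1 k, (1 - (PowerSeries.X : PowerSeries ℤ) ^ a i)) * Gser a k) * (1 - PowerSeries.X ^ (cseq a (k+1) * a (k+1))) := by ring
        _ = _ := by rw [ih hkpos (by omega)]; ring

end Series

noncomputable def indSer (S : NumericalSemigroup) : PowerSeries ℤ :=
  PowerSeries.mk fun m => if m ∈ S.carrier then 1 else 0

lemma coe_P (S : NumericalSemigroup) :
    (↑S.P : PowerSeries ℤ) = (1 - PowerSeries.X) * indSer S := by
  classical
  have hP : S.P = 1 + ∑ s ∈ S.finite_compl.toFinset, (X ^ (s + 1) - X ^ s) := by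
    unfold NumericalSemigroup.P
    rw [Finset.mul_sum]
    congr 1
    exact Finset.sum_congr rfl fun s _ => by ring
  set F := S.finite_compl.toFinset with hF
  have hmemF : ∀ m, m ∈ F ↔ m ∉ S.carrier := by
    intro m; rw [hF, Set.Finite.mem_toFinset]; rfl
  ext m
  have hrhs : (1 - PowerSeries.X) * indSer S = indSer S - indSer S * PowerSeries.X ^ 1 := by
    ring
  rw [Polynomial.coeff_coe, hP, hrhs, map_sub, PowerSeries.coeff_mul_X_pow']
  simp only [indSer, PowerSeries.coeff_mk, Polynomial.coeff_add, Polynomial.coeff_one,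
    Polynomial.finset_sum_coeff, Polynomial.coeff_sub, Polynomial.coeff_X_pow,
    Finset.sum_sub_distrib]
  have hsum2 : (∑ s ∈ F, if m = s then (1:ℤ) else 0) = if m ∈ F then 1 else 0 := by
    rw [Finset.sum_ite_eq F m (fun _ => (1:ℤ))]
  rcases Nat.eq_zero_or_pos m with rfl | hm
  · have h0F : (0:ℕ) ∉ F := fun h => (hmemF 0).1 h S.zero_mem
    have hsum1 : (∑ s ∈ F, if 0 = s + 1 then (1:ℤ) else 0) = 0 :=
      Finset.sum_eq_zero fun s _ => by simp
    rw [hsum1, hsum2]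
    simp [h0F, S.zero_mem]
  · obtain ⟨m', rfl⟩ : ∃ m', m = m' + 1 := ⟨m - 1, by omega⟩
    have hsum1 : (∑ s ∈ F, if m' + 1 = s + 1 then (1:ℤ) else 0)
        = if m' ∈ F then 1 else 0 := by
      rw [show (fun s => if m' + 1 = s + 1 then (1:ℤ) else 0)
          = fun s => if m' = s then (1:ℤ) else 0 from funext fun s => by
        simp [Nat.add_right_cancel_iff]]
      exact Finset.sum_ite_eq F m' (fun _ => (1:ℤ))
    rw [hsum1, hsum2]
    have e1 := hmemF (m' + 1)
    have e2 := hmemF m'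
    by_cases hA : m' + 1 ∈ S.carrier <;> by_cases hB : m' ∈ S.carrier <;>
      simp [hA, hB, e1.2, (hmemF _).1, Nat.succ_ne_zero] <;>
      simp_all [hmemF]


open NumericalSemigroup in
/-- For a smooth sequence `(a_1, …, a_n)` of relatively prime positive integers and
`S = ⟨a_1, …, a_n⟩`:
`∏_{i=1}^n (1-x^{a_i}) · P_S(x) = (1-x) · ∏_{i=2}^n (1-x^{c_i a_i})`. -/
theorem semigroupPolynomial_smooth (n : ℕ) (hn : 2 ≤ n) (a : ℕ → ℕ)
    (hpos : ∀ i, 1 ≤ i → i ≤ n → 0 < a i) (hgcd : dseq a n = 1) (hsmooth : SmoothSeq a n)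
    (S : NumericalSemigroup) (hS : S.carrier = gen a n) :
    (∏ i ∈ Finset.Icc 1 n, (1 - (X : Polynomial ℤ) ^ a i)) * S.P
      = (1 - X) * ∏ i ∈ Finset.Icc 2 n, (1 - (X : Polynomial ℤ) ^ (cseq a i * a i)) := by
  have htel := telescope hsmooth hpos n (by omega) le_rfl
  have hG : indSer S = Gser a n := by
    unfold indSer Gser
    simp only [hS]
  rw [← Polynomial.coe_inj]
  have hcast : ∀ (s : Finset ℕ) (f : ℕ → Polynomial ℤ),
      ((∏ i ∈ s, f i : Polynomial ℤ) : PowerSeries ℤ) = ∏ i ∈ s, ((f i : Polynomial ℤ) : PowerSeries ℤ) := by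
    intro s f
    simp only [← Polynomial.coeToPowerSeries.ringHom_apply, map_prod]
  have hone : ∀ b : ℕ, (((1 - X ^ b : Polynomial ℤ)) : PowerSeries ℤ)
      = 1 - PowerSeries.X ^ b := by
    intro b
    rw [Polynomial.coe_sub, Polynomial.coe_one, Polynomial.coe_pow, Polynomial.coe_X]
  rw [Polynomial.coe_mul, Polynomial.coe_mul, hcast, hcast, coe_P, hG]
  simp only [hone, Polynomial.coe_sub, Polynomial.coe_one, Polynomial.coe_X]
  calc (∏ i ∈ Finset.Icc 1 n, (1 - (PowerSeries.X : PowerSeries ℤ) ^ a i))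
        * ((1 - PowerSeries.X) * Gser a n)
      = (1 - PowerSeries.X) * ((∏ i ∈ Finset.Icc 1 n, (1 - (PowerSeries.X : PowerSeries ℤ) ^ a i)) * Gser a n) := by ring
    _ = _ := by rw [htel]
end
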